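/- arXiv:1904.03662 — 10 statements merged into one kernel-verified Lean document; each statement's English description precedes it below -/
import Mathlib

section
/- Let (α_n) be a sequence of nonnegative real numbers. Then α_n → 0 as n → ∞ if and only if 2^{-n} * ∑_{k=1}^n 2^k α_k → 0 as n → ∞. -/
open Filter Topology

theorem tendsto_zero_iff_dyadic_cesaro_tendsto_zero (α : ℕ → ℝ) (hα : ∀ n, 0 ≤ α n) :
    Filter.Tendsto α Filter.atTop (𝓝 0) ↔
      Filter.Tendsto (fun n => (1/2 : ℝ) ^ n * ∑ k ∈ Finset.Icc 1 n, (2 : ℝ) ^ k * α k)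
        Filter.atTop (𝓝 0) := by
  set β : ℕ → ℝ := fun n => (1/2 : ℝ) ^ n * ∑ k ∈ Finset.Icc 1 n, (2 : ℝ) ^ k * α k with hβ
  have hrec : ∀ n, β (n+1) = α (n+1) + (1/2) * β n := by
    intro n
    simp only [hβ]
    rw [Finset.sum_Icc_succ_top (by omega : 1 ≤ n+1)]
    have hp : (1/2:ℝ)^n * 2^n = 1 := by
      rw [one_div, inv_pow, inv_mul_cancel₀ (by positivity)]
    ring_nf
    linear_combination (α (1+n)) * hp
  constructor
  · intro h
    rw [Metric.tendsto_atTop] at h ⊢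
    intro ε hε
    obtain ⟨N, hN⟩ := h (ε/4) (by linarith)
    set C := ∑ k ∈ Finset.Icc 1 N, (2:ℝ)^k * α k with hC
    have htend : Tendsto (fun n => (1/2:ℝ)^n * C) atTop (𝓝 0) := by
      simpa using (tendsto_pow_atTop_nhds_zero_of_lt_one (by norm_num)
        (by norm_num : (1/2:ℝ) < 1)).mul_const C
    rw [Metric.tendsto_atTop] at htend
    obtain ⟨M, hM⟩ := htend (ε/4) (by linarith)
    refine ⟨max N M, fun n hn => ?_⟩
    have hNn : N ≤ n := le_trans (le_max_left _ _) hn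
    have hMn : M ≤ n := le_trans (le_max_right _ _) hn
    have hβ0 : 0 ≤ β n := by
      apply mul_nonneg (by positivity)
      exact Finset.sum_nonneg fun k _ => mul_nonneg (by positivity) (hα k)
    rw [Real.dist_eq, sub_zero, abs_of_nonneg hβ0]
    -- split the sum
    have hIcc : ∀ m : ℕ, Finset.Icc 1 m = Finset.Ioc 0 m := by
      intro m; rw [← Finset.Icc_add_one_left_eq_Ioc]; rfl
    have hsplit : ∑ k ∈ Finset.Icc 1 n, (2:ℝ)^k * α k
        = C + ∑ k ∈ Finset.Ioc N n, (2:ℝ)^k * α k := by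
      rw [hIcc, hC, hIcc, Finset.sum_Ioc_consecutive _ (Nat.zero_le N) hNn]
    have htail : ∑ k ∈ Finset.Ioc N n, (2:ℝ)^k * α k ≤ (ε/4) * 2^(n+1) := by
      calc ∑ k ∈ Finset.Ioc N n, (2:ℝ)^k * α k
          ≤ ∑ k ∈ Finset.Ioc N n, (2:ℝ)^k * (ε/4) := by
            apply Finset.sum_le_sum
            intro k hk
            have hkN : N ≤ k := le_of_lt (Finset.mem_Ioc.mp hk).1
            have := hN k hkN
            rw [Real.dist_eq, sub_zero, abs_of_nonneg (hα k)] at this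
            exact mul_le_mul_of_nonneg_left (le_of_lt this) (by positivity)
        _ = (∑ k ∈ Finset.Ioc N n, (2:ℝ)^k) * (ε/4) := by rw [← Finset.sum_mul]
        _ ≤ (2^(n+1)) * (ε/4) := by
            apply mul_le_mul_of_nonneg_right _ (by linarith)
            calc ∑ k ∈ Finset.Ioc N n, (2:ℝ)^k
                ≤ ∑ k ∈ Finset.range (n+1), (2:ℝ)^k := by
                  apply Finset.sum_le_sum_of_subset_of_nonneg
                  · intro k hk
                    simp only [Finset.mem_Ioc] at hk
                    simp only [Finset.mem_range]
                    omega
                  · intro k _ _; positivity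
              _ = 2^(n+1) - 1 := by
                  rw [geom_sum_eq (by norm_num : (2:ℝ) ≠ 1)]; ring
              _ ≤ 2^(n+1) := by linarith
        _ = (ε/4) * 2^(n+1) := by ring
    have hhead : (1/2:ℝ)^n * C < ε/4 := by
      have := hM n hMn
      rwa [Real.dist_eq, sub_zero, abs_of_nonneg (mul_nonneg (by positivity)
        (Finset.sum_nonneg fun k _ => mul_nonneg (by positivity) (hα k)))] at this
    have hpow : (1/2:ℝ)^n * 2^(n+1) = 2 := by
      rw [one_div, inv_pow, pow_succ]
      field_simp
    calc β n = (1/2:ℝ)^n * C + (1/2:ℝ)^n * (∑ k ∈ Finset.Ioc N n, (2:ℝ)^k * α k) := by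
          rw [hβ]; simp only []; rw [hsplit]; ring
      _ ≤ (1/2:ℝ)^n * C + (1/2:ℝ)^n * ((ε/4) * 2^(n+1)) := by
          have : (0:ℝ) ≤ (1/2:ℝ)^n := by positivity
          nlinarith [htail]
      _ = (1/2:ℝ)^n * C + (ε/4) * ((1/2:ℝ)^n * 2^(n+1)) := by ring
      _ < ε/4 + (ε/4) * 2 := by rw [hpow]; linarith
      _ < ε := by linarith
  · intro h
    have h2 : Tendsto (fun n => β (n+1) - (1/2) * β n) atTop (𝓝 0) := by
      have := (h.comp (tendsto_add_atTop_nat 1)).sub (h.const_mul (1/2:ℝ))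
      simpa only [mul_zero, sub_zero, Function.comp_def] using this
    have heq : (fun n => β (n+1) - (1/2) * β n) = fun n => α (n+1) := by
      funext n; rw [hrec]; ring
    rw [heq] at h2
    exact (tendsto_add_atTop_iff_nat 1).mp h2
end

section
/- Let h₁, h₃ : [0,∞) → ℝ be measurable with 0 ≤ h₁ ≤ 1 and h₃² ≤ h₁ a.e., and let m₃(t) = ∫_0^t h₃(s) ds. Define p(t) = sup_{x ≥ t} (x ∫_x^∞ h₁(s) ds)^{1/2} and assume p(t) < ∞ for all t > 0. Then for all 0 < x < y: |m₃(y) − m₃(x)| ≤ p(x)(1 + log(y/x)). -/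
open MeasureTheory Set Real

theorem m3_increment_bound
    (h₁ h₃ : ℝ → ℝ) (hmeas₁ : Measurable h₁) (hmeas₃ : Measurable h₃)
    (hbd : ∀ᵐ t ∂(volume.restrict (Ioi (0:ℝ))), 0 ≤ h₁ t ∧ h₁ t ≤ 1 ∧ h₃ t ^ 2 ≤ h₁ t)
    (hint₁ : IntegrableOn h₁ (Ioi (0:ℝ)))
    (hint₃ : ∀ T : ℝ, IntegrableOn h₃ (Ioo 0 T))
    (m₃ : ℝ → ℝ) (hm₃ : ∀ t, m₃ t = ∫ s in Ioo 0 t, h₃ s)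
    (p : ℝ → ℝ)
    (hp : ∀ t, p t = ⨆ x : {x : ℝ // t ≤ x}, Real.sqrt (x.1 * ∫ s in Ioi x.1, h₁ s))
    (hpfin : ∀ t : ℝ, 0 < t →
      BddAbove (Set.range fun x : {x : ℝ // t ≤ x} =>
        Real.sqrt (x.1 * ∫ s in Ioi x.1, h₁ s))) :
    ∀ x y : ℝ, 0 < x → x < y → |m₃ y - m₃ x| ≤ p x * (1 + Real.log (y / x)) := by
  intro x y hx hxy
  have hy : 0 < y := hx.trans hxy
  set L := Real.log (y / x) with hLdef
  have hL0 : 0 ≤ L := Real.log_nonneg ((one_le_div hx).2 hxy.le)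
  -- basic nonnegativity facts
  have h1nn : ∀ᵐ t ∂(volume.restrict (Ioi (0:ℝ))), 0 ≤ h₁ t := hbd.mono fun t ht => ht.1
  have hQnn : ∀ a : ℝ, 0 < a → 0 ≤ ∫ s in Ioi a, h₁ s := fun a ha =>
    setIntegral_nonneg_of_ae_restrict
      (ae_restrict_of_ae_restrict_of_subset (Ioi_subset_Ioi ha.le) h1nn)
  have keyQ : ∀ a : ℝ, x ≤ a → a * ∫ s in Ioi a, h₁ s ≤ p x ^ 2 := by
    intro a ha
    have h0 : 0 ≤ a * ∫ s in Ioi a, h₁ s :=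
      mul_nonneg (hx.le.trans ha) (hQnn a (hx.trans_le ha))
    have h1 : Real.sqrt (a * ∫ s in Ioi a, h₁ s) ≤ p x := by
      rw [hp x]; exact le_ciSup (hpfin x hx) ⟨a, ha⟩
    calc a * ∫ s in Ioi a, h₁ s = Real.sqrt (a * ∫ s in Ioi a, h₁ s) ^ 2 :=
          (Real.sq_sqrt h0).symm
      _ ≤ p x ^ 2 := pow_le_pow_left₀ (Real.sqrt_nonneg _) h1 2
  have hP0 : 0 ≤ p x := by
    rw [hp x]
    exact (Real.sqrt_nonneg (x * ∫ s in Ioi x, h₁ s)).trans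
      (le_ciSup (hpfin x hx) ⟨x, le_refl x⟩)
  -- step: m₃ y - m₃ x = ∫ over Ioo x y
  have hIxy : IntegrableOn h₃ (Ioo x y) := (hint₃ y).mono_set (Ioo_subset_Ioo hx.le le_rfl)
  have hstep : m₃ y - m₃ x = ∫ s in Ioo x y, h₃ s := by
    have hi1 : IntegrableOn h₃ (Ioc 0 x) := by
      refine (hint₃ y).mono_set ?_
      intro t ht; exact ⟨ht.1, ht.2.trans_lt hxy⟩
    have hi2 : IntegrableOn h₃ (Ioc x y) := by
      refine (hint₃ (y+1)).mono_set ?_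
      intro t ht; exact ⟨hx.trans ht.1, ht.2.trans_lt (by linarith)⟩
    have hsplit : Ioc 0 x ∪ Ioc x y = Ioc 0 y := Ioc_union_Ioc_eq_Ioc hx.le hxy.le
    have hd : Disjoint (Ioc 0 x) (Ioc x y) := Ioc_disjoint_Ioc_of_le le_rfl
    have := setIntegral_union hd measurableSet_Ioc hi1 hi2 (f := h₃) (μ := volume)
    rw [hsplit] at this
    have h3 : ∫ s in Ioc x y, h₃ s = ∫ s in Ioo x y, h₃ s := integral_Ioc_eq_integral_Ioo
    rw [hm₃, hm₃, ← integral_Ioc_eq_integral_Ioo, ← integral_Ioc_eq_integral_Ioo, this, h3]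
    ring
  rw [hstep]
  have habs : |∫ s in Ioo x y, h₃ s| ≤ ∫ s in Ioo x y, |h₃ s| := by
    simpa [Real.norm_eq_abs] using
      norm_integral_le_integral_norm (μ := volume.restrict (Ioo x y)) h₃
  refine habs.trans ?_
  -- reduce to a lintegral bound
  have hIabs : IntegrableOn (fun t => |h₃ t|) (Ioo x y) := hIxy.abs
  have heq : ENNReal.ofReal (∫ s in Ioo x y, |h₃ s|)
      = ∫⁻ s in Ioo x y, ENNReal.ofReal |h₃ s| :=
    ofReal_integral_eq_lintegral_ofReal hIabs (Filter.Eventually.of_forall fun t => abs_nonneg _)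
  -- the lintegral of 1/t
  have hInvInt : IntegrableOn (fun t : ℝ => t⁻¹) (Ioo x y) := by
    refine (ContinuousOn.integrableOn_Icc ?_).mono_set Ioo_subset_Icc_self
    exact ContinuousOn.inv₀ continuousOn_id fun t ht => ne_of_gt (hx.trans_le ht.1)
  have hInvnn : 0 ≤ᶠ[ae (volume.restrict (Ioo x y))] fun t : ℝ => t⁻¹ := by
    filter_upwards [ae_restrict_mem measurableSet_Ioo] with t ht
    exact inv_nonneg.2 (hx.trans ht.1).le
  have hB : (∫⁻ t in Ioo x y, ENNReal.ofReal t⁻¹) = ENNReal.ofReal L := by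
    rw [← ofReal_integral_eq_lintegral_ofReal hInvInt hInvnn]
    congr 1
    rw [← integral_Ioc_eq_integral_Ioo, ← intervalIntegral.integral_of_le hxy.le]
    exact integral_inv (by
      intro h
      rcases h with ⟨h1, h2⟩
      rw [min_eq_left hxy.le] at h1
      exact absurd h1 (not_le.2 hx))
  -- lintegral form of Q
  have hQlin : ∀ s : ℝ, 0 < s → (∫⁻ t in Ioi s, ENNReal.ofReal (h₁ t))
      = ENNReal.ofReal (∫ t in Ioi s, h₁ t) := by
    intro s hs
    exact (ofReal_integral_eq_lintegral_ofReal (hint₁.mono_set (Ioi_subset_Ioi hs.le))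
      (ae_restrict_of_ae_restrict_of_subset (Ioi_subset_Ioi hs.le) h1nn)).symm
  have hIooIoi : Ioo x y ⊆ Ioi (0:ℝ) := fun t ht => hx.trans ht.1
  have hI1xy : IntegrableOn h₁ (Ioo x y) := hint₁.mono_set hIooIoi
  have h1nnxy : 0 ≤ᶠ[ae (volume.restrict (Ioo x y))] h₁ :=
    ae_restrict_of_ae_restrict_of_subset hIooIoi h1nn
  -- Part 1 of the Fubini bound
  have part1 : (∫⁻ t in Ioo x y, ENNReal.ofReal (x * h₁ t)) ≤ ENNReal.ofReal (p x ^ 2) := by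
    have heq1 : ENNReal.ofReal (∫ t in Ioo x y, x * h₁ t)
        = ∫⁻ t in Ioo x y, ENNReal.ofReal (x * h₁ t) :=
      ofReal_integral_eq_lintegral_ofReal (hI1xy.const_mul x)
        (h1nnxy.mono fun t ht => mul_nonneg hx.le ht)
    rw [← heq1]
    apply ENNReal.ofReal_le_ofReal
    rw [integral_const_mul]
    calc x * ∫ t in Ioo x y, h₁ t ≤ x * ∫ t in Ioi x, h₁ t := by
          refine mul_le_mul_of_nonneg_left ?_ hx.le
          exact setIntegral_mono_set (hint₁.mono_set (Ioi_subset_Ioi hx.le))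
            (ae_restrict_of_ae_restrict_of_subset (Ioi_subset_Ioi hx.le) h1nn)
            (HasSubset.Subset.eventuallyLE (fun t ht => ht.1))
      _ ≤ p x ^ 2 := keyQ x le_rfl
  -- Part 2 of the Fubini bound
  have part2 : (∫⁻ t in Ioo x y, ENNReal.ofReal ((t - x) * h₁ t))
      ≤ ENNReal.ofReal (p x ^ 2 * L) := by
    set F : ℝ → ℝ → ENNReal :=
      fun t s => if x < s ∧ s < t then ENNReal.ofReal (h₁ t) else 0 with hF
    have hFmeas : AEMeasurable (Function.uncurry F)
        ((volume.restrict (Ioo x y)).prod (volume.restrict (Ioo x y))) := by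
      apply Measurable.aemeasurable
      have hset : MeasurableSet {q : ℝ × ℝ | x < q.2 ∧ q.2 < q.1} := by
        exact (measurableSet_lt measurable_const measurable_snd).inter
          (measurableSet_lt measurable_snd measurable_fst)
      have huncurry : Function.uncurry F
          = Set.indicator {q : ℝ × ℝ | x < q.2 ∧ q.2 < q.1}
              (fun q => ENNReal.ofReal (h₁ q.1)) := by
        funext q
        by_cases h : x < q.2 ∧ q.2 < q.1 <;>
          simp [Function.uncurry, hF, Set.indicator, h]
      rw [huncurry]
      exact ((hmeas₁.comp measurable_fst).ennreal_ofReal).indicator hset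
    have hinner1 : ∀ t ∈ Ioo x y,
        (∫⁻ s in Ioo x y, F t s) = ENNReal.ofReal (t - x) * ENNReal.ofReal (h₁ t) := by
      intro t ht
      have hsub : Ioo x t ⊆ Ioo x y := Ioo_subset_Ioo le_rfl ht.2.le
      have hFt : ∀ s, F t s = (Ioo x t).indicator (fun _ => ENNReal.ofReal (h₁ t)) s := by
        intro s
        by_cases h : x < s ∧ s < t <;> simp [hF, Set.indicator, mem_Ioo, h]
      rw [lintegral_congr hFt, lintegral_indicator measurableSet_Ioo,
        Measure.restrict_restrict measurableSet_Ioo, inter_eq_self_of_subset_left hsub,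
        setLIntegral_const, Real.volume_Ioo, mul_comm]
    have hinner2 : ∀ s ∈ Ioo x y,
        (∫⁻ t in Ioo x y, F t s) ≤ ENNReal.ofReal (p x ^ 2) * ENNReal.ofReal s⁻¹ := by
      intro s hs
      have hs0 : 0 < s := hx.trans hs.1
      have hFs : ∀ t, F t s = (Ioi s).indicator (fun t => ENNReal.ofReal (h₁ t)) t := by
        intro t
        by_cases h : s < t <;> simp [hF, Set.indicator, mem_Ioi, h, hs.1]
      calc (∫⁻ t in Ioo x y, F t s)
          = ∫⁻ t in Ioo x y, (Ioi s).indicator (fun t => ENNReal.ofReal (h₁ t)) t :=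
            lintegral_congr hFs
        _ ≤ ∫⁻ t, (Ioi s).indicator (fun t => ENNReal.ofReal (h₁ t)) t :=
            lintegral_mono' Measure.restrict_le_self le_rfl
        _ = ∫⁻ t in Ioi s, ENNReal.ofReal (h₁ t) := lintegral_indicator measurableSet_Ioi _
        _ = ENNReal.ofReal (∫ t in Ioi s, h₁ t) := hQlin s hs0
        _ ≤ ENNReal.ofReal (p x ^ 2 * s⁻¹) := by
            apply ENNReal.ofReal_le_ofReal
            rw [← div_eq_mul_inv, le_div_iff₀ hs0, mul_comm]
            exact keyQ s hs.1.le
        _ = ENNReal.ofReal (p x ^ 2) * ENNReal.ofReal s⁻¹ :=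
            ENNReal.ofReal_mul (by positivity)
    calc (∫⁻ t in Ioo x y, ENNReal.ofReal ((t - x) * h₁ t))
        = ∫⁻ t in Ioo x y, ∫⁻ s in Ioo x y, F t s := by
          refine setLIntegral_congr_fun measurableSet_Ioo
            (fun t ht => ?_)
          rw [hinner1 t ht, ← ENNReal.ofReal_mul (by linarith [ht.1] : (0:ℝ) ≤ t - x)]
      _ = ∫⁻ s in Ioo x y, ∫⁻ t in Ioo x y, F t s := lintegral_lintegral_swap hFmeas
      _ ≤ ∫⁻ s in Ioo x y, ENNReal.ofReal (p x ^ 2) * ENNReal.ofReal s⁻¹ :=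
          setLIntegral_mono' measurableSet_Ioo hinner2
      _ = ENNReal.ofReal (p x ^ 2) * ∫⁻ s in Ioo x y, ENNReal.ofReal s⁻¹ :=
          lintegral_const_mul _ (measurable_inv.ennreal_ofReal)
      _ = ENNReal.ofReal (p x ^ 2) * ENNReal.ofReal L := by rw [hB]
      _ = ENNReal.ofReal (p x ^ 2 * L) := (ENNReal.ofReal_mul (by positivity)).symm
  -- combine into a bound on ∫⁻ t h₁ t
  have hA : (∫⁻ t in Ioo x y, ENNReal.ofReal (t * h₁ t))
      ≤ ENNReal.ofReal (p x ^ 2 * (1 + L)) := by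
    have hsplit : (∫⁻ t in Ioo x y, ENNReal.ofReal (t * h₁ t))
        = (∫⁻ t in Ioo x y, ENNReal.ofReal (x * h₁ t))
          + ∫⁻ t in Ioo x y, ENNReal.ofReal ((t - x) * h₁ t) := by
      rw [← lintegral_add_left ((hmeas₁.const_mul x).ennreal_ofReal)]
      apply lintegral_congr_ae
      filter_upwards [ae_restrict_mem measurableSet_Ioo, h1nnxy] with t ht h1t
      rw [← ENNReal.ofReal_add (mul_nonneg hx.le h1t)
        (mul_nonneg (by linarith [ht.1]) h1t)]
      congr 1
      ring
    rw [hsplit]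
    calc (∫⁻ t in Ioo x y, ENNReal.ofReal (x * h₁ t))
          + ∫⁻ t in Ioo x y, ENNReal.ofReal ((t - x) * h₁ t)
        ≤ ENNReal.ofReal (p x ^ 2) + ENNReal.ofReal (p x ^ 2 * L) := add_le_add part1 part2
      _ = ENNReal.ofReal (p x ^ 2 * (1 + L)) := by
          rw [← ENNReal.ofReal_add (by positivity) (by positivity)]
          congr 1
          ring
  -- Cauchy-Schwarz
  set f : ℝ → ENNReal := fun t => ENNReal.ofReal (Real.sqrt t * |h₃ t|) with hf
  set g : ℝ → ENNReal := fun t => ENNReal.ofReal (Real.sqrt t)⁻¹ with hg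
  have hfm : AEMeasurable f (volume.restrict (Ioo x y)) :=
    ((Real.continuous_sqrt.measurable.mul hmeas₃.abs).ennreal_ofReal).aemeasurable
  have hgm : AEMeasurable g (volume.restrict (Ioo x y)) :=
    ((Real.continuous_sqrt.measurable.inv).ennreal_ofReal).aemeasurable
  have hCS := ENNReal.lintegral_mul_le_Lp_mul_Lq (volume.restrict (Ioo x y))
    Real.HolderConjugate.two_two hfm hgm
  have hfg : (∫⁻ t in Ioo x y, ENNReal.ofReal |h₃ t|) = ∫⁻ t in Ioo x y, (f * g) t := by
    refine setLIntegral_congr_fun measurableSet_Ioo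
      (fun t ht => ?_)
    have hst : 0 < Real.sqrt t := Real.sqrt_pos.2 (hx.trans ht.1)
    have hval : Real.sqrt t * |h₃ t| * (Real.sqrt t)⁻¹ = |h₃ t| := by
      field_simp
    rw [Pi.mul_apply, hf, hg, ← ENNReal.ofReal_mul (by positivity), hval]
  have hf2 : (∫⁻ t in Ioo x y, f t ^ (2:ℝ)) ≤ ENNReal.ofReal (p x ^ 2 * (1 + L)) := by
    refine le_trans ?_ hA
    apply lintegral_mono_ae
    filter_upwards [ae_restrict_mem measurableSet_Ioo,
      ae_restrict_of_ae_restrict_of_subset hIooIoi hbd] with t ht hbt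
    have ht0 : (0:ℝ) ≤ t := (hx.trans ht.1).le
    rw [hf, ENNReal.ofReal_rpow_of_nonneg (by positivity) (by norm_num)]
    apply ENNReal.ofReal_le_ofReal
    have hsq : (Real.sqrt t * |h₃ t|) ^ (2:ℝ) = t * h₃ t ^ 2 := by
      rw [show ((2:ℝ)) = ((2:ℕ):ℝ) by norm_num, Real.rpow_natCast, mul_pow,
        Real.sq_sqrt ht0, sq_abs]
    rw [hsq]
    exact mul_le_mul_of_nonneg_left hbt.2.2 ht0
  have hg2 : (∫⁻ t in Ioo x y, g t ^ (2:ℝ)) = ENNReal.ofReal L := by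
    rw [← hB]
    refine setLIntegral_congr_fun measurableSet_Ioo
      (fun t ht => ?_)
    have ht0 : (0:ℝ) < t := hx.trans ht.1
    rw [hg, ENNReal.ofReal_rpow_of_nonneg (by positivity) (by norm_num)]
    congr 1
    rw [show ((2:ℝ)) = ((2:ℕ):ℝ) by norm_num, Real.rpow_natCast, inv_pow,
      Real.sq_sqrt ht0.le]
  have hgoal : (∫⁻ s in Ioo x y, ENNReal.ofReal |h₃ s|)
      ≤ ENNReal.ofReal (p x * (1 + L)) := by
    rw [hfg]
    refine hCS.trans ?_
    calc (∫⁻ t in Ioo x y, f t ^ (2:ℝ)) ^ ((1:ℝ)/2) * (∫⁻ t in Ioo x y, g t ^ (2:ℝ)) ^ ((1:ℝ)/2)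
        ≤ (ENNReal.ofReal (p x ^ 2 * (1 + L))) ^ ((1:ℝ)/2) * (ENNReal.ofReal L) ^ ((1:ℝ)/2) :=
          mul_le_mul' (ENNReal.rpow_le_rpow hf2 (by norm_num)) (le_of_eq (by rw [hg2]))
      _ = ENNReal.ofReal ((p x ^ 2 * (1 + L)) ^ ((1:ℝ)/2) * L ^ ((1:ℝ)/2)) := by
          rw [ENNReal.ofReal_rpow_of_nonneg (by positivity) (by norm_num),
            ENNReal.ofReal_rpow_of_nonneg hL0 (by norm_num),
            ← ENNReal.ofReal_mul (by positivity)]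
      _ ≤ ENNReal.ofReal (p x * (1 + L)) := by
          apply ENNReal.ofReal_le_ofReal
          rw [← Real.sqrt_eq_rpow, ← Real.sqrt_eq_rpow, ← Real.sqrt_mul (by positivity)]
          calc Real.sqrt (p x ^ 2 * (1 + L) * L) ≤ Real.sqrt ((p x * (1 + L)) ^ 2) := by
                apply Real.sqrt_le_sqrt
                nlinarith [sq_nonneg (p x)]
            _ = p x * (1 + L) := Real.sqrt_sq (mul_nonneg hP0 (by linarith))
  have hfinal : ENNReal.ofReal (∫ s in Ioo x y, |h₃ s|)
      ≤ ENNReal.ofReal (p x * (1 + L)) := by rw [heq]; exact hgoal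
  exact (ENNReal.ofReal_le_ofReal_iff (mul_nonneg hP0 (by linarith))).1 hfinal
end

section
/- Define F(t,λ) = ∫_t^∞ h₁(s) e^{2λ m₃(s)} ds · ∫_0^t h₂(s) e^{−2λ m₃(s)} ds for measurable nonnegative h₁, h₂ and m₃(s) = ∫_0^s h₃. Then for every finite interval [μ₁, μ₂] and every λ ∈ [μ₁, μ₂]: F(t,λ) ≤ max{F(t,μ₁), F(t,μ₂), F(t,μ₁)^{1/2}, F(t,μ₂)^{1/2}, F(t,μ₁)·F(t,μ₂)}. -/
open MeasureTheory Set Real ENNReal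

private lemma ofReal_exp_interp (a x y p q : ℝ) (ha : 0 ≤ a) (hp : 0 < p) (hq : 0 < q)
    (hpq : p + q = 1) :
    ENNReal.ofReal (a * Real.exp (p * x + q * y)) =
      ENNReal.ofReal (a * Real.exp x) ^ p * ENNReal.ofReal (a * Real.exp y) ^ q := by
  rw [ENNReal.ofReal_rpow_of_nonneg (by positivity) hp.le,
      ENNReal.ofReal_rpow_of_nonneg (by positivity) hq.le,
      ← ENNReal.ofReal_mul (by positivity)]
  congr 1
  rcases ha.eq_or_lt with rfl | ha0
  · simp [Real.zero_rpow hp.ne', Real.zero_rpow hq.ne',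
      Real.mul_rpow le_rfl (Real.exp_nonneg _)]
  · rw [Real.mul_rpow ha (Real.exp_nonneg _), Real.mul_rpow ha (Real.exp_nonneg _),
      ← Real.exp_mul, ← Real.exp_mul]
    calc a * Real.exp (p * x + q * y)
        = (a ^ p * a ^ q) * (Real.exp (x * p) * Real.exp (y * q)) := by
          rw [← Real.rpow_add ha0, hpq, Real.rpow_one, ← Real.exp_add]
          ring_nf
      _ = a ^ p * Real.exp (x * p) * (a ^ q * Real.exp (y * q)) := by ring

private lemma geom_mean_le_max (A B : ℝ≥0∞) (p q : ℝ) (hp : 0 ≤ p) (hq : 0 ≤ q)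
    (hpq : p + q = 1) : A ^ p * B ^ q ≤ max A B := by
  calc A ^ p * B ^ q ≤ (max A B) ^ p * (max A B) ^ q :=
        mul_le_mul' (ENNReal.rpow_le_rpow (le_max_left _ _) hp)
          (ENNReal.rpow_le_rpow (le_max_right _ _) hq)
    _ = (max A B) ^ (p + q) := (ENNReal.rpow_add_of_nonneg _ _ hp hq).symm
    _ = max A B := by rw [hpq, ENNReal.rpow_one]

theorem F_max_interpolation_bound
    (h₁ h₂ h₃ : ℝ → ℝ) (hmeas₁ : Measurable h₁) (hmeas₂ : Measurable h₂)
    (hmeas₃ : Measurable h₃)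
    (hnn₁ : ∀ s, 0 ≤ h₁ s) (hnn₂ : ∀ s, 0 ≤ h₂ s)
    (hint₃ : ∀ T : ℝ, IntegrableOn h₃ (Ioo 0 T))
    (m₃ : ℝ → ℝ) (hm₃ : ∀ s, m₃ s = ∫ u in Ioo 0 s, h₃ u)
    (F : ℝ → ℝ → ℝ≥0∞)
    (hF : ∀ t lam, F t lam =
      (∫⁻ s in Ioi t, ENNReal.ofReal (h₁ s * Real.exp (2 * lam * m₃ s))) *
      (∫⁻ s in Ioo 0 t, ENNReal.ofReal (h₂ s * Real.exp (-(2 * lam * m₃ s))))) :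
    ∀ μ₁ μ₂ : ℝ, μ₁ ≤ μ₂ → ∀ lam ∈ Icc μ₁ μ₂, ∀ t : ℝ,
      F t lam ≤ max (max (max (max (F t μ₁) (F t μ₂)) ((F t μ₁) ^ (1/2 : ℝ)))
        ((F t μ₂) ^ (1/2 : ℝ))) (F t μ₁ * F t μ₂) := by
  intro μ₁ μ₂ hμ lam hlam t
  have hsuff : F t lam ≤ max (F t μ₁) (F t μ₂) → F t lam ≤
      max (max (max (max (F t μ₁) (F t μ₂)) ((F t μ₁) ^ (1/2 : ℝ)))
        ((F t μ₂) ^ (1/2 : ℝ))) (F t μ₁ * F t μ₂) := fun h =>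
    h.trans (le_max_of_le_left (le_max_of_le_left (le_max_of_le_left le_rfl)))
  apply hsuff
  -- trivial cases
  rcases eq_or_lt_of_le hlam.1 with h1 | h1
  · rw [← h1]; exact le_max_left _ _
  rcases eq_or_lt_of_le hlam.2 with h2 | h2
  · rw [h2]; exact le_max_right _ _
  -- now μ₁ < lam < μ₂
  have hlt : μ₁ < μ₂ := h1.trans h2
  set p : ℝ := (μ₂ - lam) / (μ₂ - μ₁) with hpdef
  set q : ℝ := (lam - μ₁) / (μ₂ - μ₁) with hqdef
  have hd : (0:ℝ) < μ₂ - μ₁ := by linarith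
  have hp : 0 < p := div_pos (by linarith) hd
  have hq : 0 < q := div_pos (by linarith) hd
  have hpq : p + q = 1 := by
    rw [hpdef, hqdef, ← add_div, show μ₂ - lam + (lam - μ₁) = μ₂ - μ₁ by ring]
    exact div_self hd.ne'
  have hlamc : lam = p * μ₁ + q * μ₂ := by
    rw [hpdef, hqdef]
    field_simp
    ring
  -- measurability of m₃
  have hm₃meas : Measurable m₃ := by
    have hind : ∀ a b : ℝ, IntervalIntegrable ((Ioi (0:ℝ)).indicator h₃) volume a b := by
      intro a b
      wlog hab : a ≤ b generalizing a b
      · exact (this b a (le_of_not_ge hab)).symm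
      rw [intervalIntegrable_iff_integrableOn_Ioc_of_le hab, IntegrableOn,
        integrable_indicator_iff measurableSet_Ioi, IntegrableOn,
        Measure.restrict_restrict measurableSet_Ioi]
      refine (hint₃ (b + 1)).mono_set ?_
      rintro x ⟨hx1, hx2⟩
      exact ⟨hx1, lt_of_le_of_lt hx2.2 (by linarith)⟩
    have hcont : Continuous fun s => ∫ x in (0:ℝ)..s, (Ioi (0:ℝ)).indicator h₃ x :=
      intervalIntegral.continuous_primitive hind 0
    have heq : m₃ = fun s => ∫ x in (0:ℝ)..s, (Ioi (0:ℝ)).indicator h₃ x := by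
      funext s
      rcases le_or_gt s 0 with hs | hs
      · have hioo : Ioo (0:ℝ) s = ∅ := Ioo_eq_empty (by simpa using not_lt.mpr hs)
        have hinter : Ioi (0:ℝ) ∩ Ioc s 0 = ∅ := by
          ext x
          simp only [mem_inter_iff, mem_Ioi, mem_Ioc, mem_empty_iff_false, iff_false, not_and]
          intro hx hsx
          exact not_le.mpr hx
        rw [hm₃ s, hioo, intervalIntegral.integral_of_ge hs,
          integral_indicator measurableSet_Ioi, Measure.restrict_restrict measurableSet_Ioi,
          hinter]
        simp
      · rw [hm₃ s, intervalIntegral.integral_of_le hs.le,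
          integral_indicator measurableSet_Ioi, Measure.restrict_restrict measurableSet_Ioi,
          inter_eq_right.mpr (Ioc_subset_Ioi_self), ← integral_Ioc_eq_integral_Ioo]
    rw [heq]; exact hcont.measurable
  -- measurable integrands
  have hmint₁ : ∀ μ : ℝ, Measurable fun s => ENNReal.ofReal (h₁ s * Real.exp (2 * μ * m₃ s)) :=
    fun μ => (hmeas₁.mul ((hm₃meas.const_mul (2 * μ)).exp)).ennreal_ofReal
  have hmint₂ : ∀ μ : ℝ, Measurable fun s => ENNReal.ofReal (h₂ s * Real.exp (-(2 * μ * m₃ s))) :=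
    fun μ => (hmeas₂.mul (((hm₃meas.const_mul (2 * μ)).neg).exp)).ennreal_ofReal
  -- pointwise interpolation
  have key1 : ∀ s : ℝ, ENNReal.ofReal (h₁ s * Real.exp (2 * lam * m₃ s)) =
      ENNReal.ofReal (h₁ s * Real.exp (2 * μ₁ * m₃ s)) ^ p *
      ENNReal.ofReal (h₁ s * Real.exp (2 * μ₂ * m₃ s)) ^ q := by
    intro s
    have : 2 * lam * m₃ s = p * (2 * μ₁ * m₃ s) + q * (2 * μ₂ * m₃ s) := by
      rw [hlamc]; ring
    rw [this]
    exact ofReal_exp_interp _ _ _ _ _ (hnn₁ s) hp hq hpq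
  have key2 : ∀ s : ℝ, ENNReal.ofReal (h₂ s * Real.exp (-(2 * lam * m₃ s))) =
      ENNReal.ofReal (h₂ s * Real.exp (-(2 * μ₁ * m₃ s))) ^ p *
      ENNReal.ofReal (h₂ s * Real.exp (-(2 * μ₂ * m₃ s))) ^ q := by
    intro s
    have : -(2 * lam * m₃ s) = p * (-(2 * μ₁ * m₃ s)) + q * (-(2 * μ₂ * m₃ s)) := by
      rw [hlamc]; ring
    rw [this]
    exact ofReal_exp_interp _ _ _ _ _ (hnn₂ s) hp hq hpq
  -- Hölder
  have hH1 : (∫⁻ s in Ioi t, ENNReal.ofReal (h₁ s * Real.exp (2 * lam * m₃ s))) ≤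
      (∫⁻ s in Ioi t, ENNReal.ofReal (h₁ s * Real.exp (2 * μ₁ * m₃ s))) ^ p *
      (∫⁻ s in Ioi t, ENNReal.ofReal (h₁ s * Real.exp (2 * μ₂ * m₃ s))) ^ q := by
    calc (∫⁻ s in Ioi t, ENNReal.ofReal (h₁ s * Real.exp (2 * lam * m₃ s)))
        = ∫⁻ s in Ioi t, (ENNReal.ofReal (h₁ s * Real.exp (2 * μ₁ * m₃ s))) ^ p *
            (ENNReal.ofReal (h₁ s * Real.exp (2 * μ₂ * m₃ s))) ^ q :=
          lintegral_congr fun s => key1 s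
      _ ≤ _ := ENNReal.lintegral_mul_norm_pow_le ((hmint₁ μ₁).aemeasurable)
          ((hmint₁ μ₂).aemeasurable) hp.le hq.le hpq
  have hH2 : (∫⁻ s in Ioo 0 t, ENNReal.ofReal (h₂ s * Real.exp (-(2 * lam * m₃ s)))) ≤
      (∫⁻ s in Ioo 0 t, ENNReal.ofReal (h₂ s * Real.exp (-(2 * μ₁ * m₃ s)))) ^ p *
      (∫⁻ s in Ioo 0 t, ENNReal.ofReal (h₂ s * Real.exp (-(2 * μ₂ * m₃ s)))) ^ q := by
    calc (∫⁻ s in Ioo 0 t, ENNReal.ofReal (h₂ s * Real.exp (-(2 * lam * m₃ s))))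
        = ∫⁻ s in Ioo 0 t, (ENNReal.ofReal (h₂ s * Real.exp (-(2 * μ₁ * m₃ s)))) ^ p *
            (ENNReal.ofReal (h₂ s * Real.exp (-(2 * μ₂ * m₃ s)))) ^ q :=
          lintegral_congr fun s => key2 s
      _ ≤ _ := ENNReal.lintegral_mul_norm_pow_le ((hmint₂ μ₁).aemeasurable)
          ((hmint₂ μ₂).aemeasurable) hp.le hq.le hpq
  calc F t lam ≤ (F t μ₁) ^ p * (F t μ₂) ^ q := by
        rw [hF t lam, hF t μ₁, hF t μ₂,
          ENNReal.mul_rpow_of_nonneg _ _ hp.le, ENNReal.mul_rpow_of_nonneg _ _ hq.le,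
          mul_mul_mul_comm]
        exact mul_le_mul' hH1 hH2
    _ ≤ max (F t μ₁) (F t μ₂) := geom_mean_le_max _ _ _ _ hp.le hq.le hpq
end

section
/- Let φ : [0,1) → (0,∞) be continuous and regularly varying at 1 with index ρ > 0. Set κ ≡ 1 on [0,1), c_n = 1 − 2^{-n}, and ω_n = 2^{-n/2} (∫_{c_{n-1}}^{c_n} φ(s)² ds)^{1/2}. Then there exist constants c, C > 0 such that c · 2^{-n} φ(1 − 2^{-n}) ≤ ω_n ≤ C · 2^{-n} φ(1 − 2^{-n}) for all sufficiently large n. -/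
open Filter Topology Set MeasureTheory Pointwise

lemma rv_key (φ : ℝ → ℝ) (ρ : ℝ) (hρ : 0 < ρ)
    (hcont : ContinuousOn φ (Ico (0:ℝ) 1))
    (hpos : ∀ t ∈ Ico (0:ℝ) 1, 0 < φ t)
    (hreg : ∀ k : ℝ, 0 < k →
      Tendsto (fun x : ℝ => φ ((k * x - 1) / (k * x)) / φ ((x - 1) / x))
        atTop (𝓝 (k ^ ρ))) :
    ∃ c C X : ℝ, 0 < c ∧ 0 < C ∧ 4 ≤ X ∧ ∀ x : ℝ, X ≤ x → ∀ k : ℝ, k ∈ Icc (1/2:ℝ) 1 →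
      c * φ ((x-1)/x) ≤ φ ((k*x-1)/(k*x)) ∧ φ ((k*x-1)/(k*x)) ≤ C * φ ((x-1)/x) := by
  have psi_pos : ∀ x : ℝ, 1 ≤ x → 0 < φ ((x-1)/x) := by
    intro x hx
    have hx0 : (0:ℝ) < x := lt_of_lt_of_le one_pos hx
    refine hpos _ ⟨div_nonneg (by linarith) hx0.le, ?_⟩
    rw [div_lt_one hx0]; linarith
  set b : ℝ := (1/4 : ℝ) ^ ρ with hbdef
  have hb : 0 < b := Real.rpow_pos_of_pos (by norm_num) ρ
  set ε : ℝ := min (b/2) (1/2) with hεdef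
  have hε : 0 < ε := lt_min (by linarith) (by norm_num)
  -- the Egorov-type sets
  set S : ℝ → Set ℝ := fun x =>
    {k ∈ Icc (1/4:ℝ) 1 | |φ ((k*x-1)/(k*x)) / φ ((x-1)/x) - k ^ ρ| ≤ ε} with hSdef
  set A : ℕ → Set ℝ := fun mm =>
    Icc (1/4:ℝ) 1 ∩ ⋂ (x : ℝ) (_ : 4 ≤ x) (_ : (mm:ℝ) ≤ x), S x with hAdef
  have memA : ∀ mm (k : ℝ), k ∈ A mm ↔ k ∈ Icc (1/4:ℝ) 1 ∧
      ∀ x : ℝ, 4 ≤ x → (mm:ℝ) ≤ x → |φ ((k*x-1)/(k*x)) / φ ((x-1)/x) - k ^ ρ| ≤ ε := by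
    intro mm k
    simp only [hAdef, hSdef, mem_inter_iff, mem_iInter, mem_sep_iff]
    constructor
    · rintro ⟨h1, h2⟩; exact ⟨h1, fun x hx4 hxm => (h2 x hx4 hxm).2⟩
    · rintro ⟨h1, h2⟩; exact ⟨h1, fun x hx4 hxm => ⟨h1, h2 x hx4 hxm⟩⟩
  have closed_S : ∀ x : ℝ, 4 ≤ x → IsClosed (S x) := by
    intro x hx4
    have hxpos : (0:ℝ) < x := by linarith
    have hinner : ∀ k ∈ Icc (1/4:ℝ) 1, (1:ℝ) ≤ k * x := by
      intro k hk
      calc (1:ℝ) = (1/4) * 4 := by norm_num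
      _ ≤ k * x := mul_le_mul hk.1 hx4 (by norm_num) (le_trans (by norm_num) hk.1)
    have hc1 : ContinuousOn (fun k : ℝ => (k*x-1)/(k*x)) (Icc (1/4:ℝ) 1) := by
      refine ContinuousOn.div ?_ ?_ ?_
      · exact (continuousOn_id.mul continuousOn_const).sub continuousOn_const
      · exact continuousOn_id.mul continuousOn_const
      · intro k hk; have := hinner k hk; positivity
    have hmaps : MapsTo (fun k : ℝ => (k*x-1)/(k*x)) (Icc (1/4:ℝ) 1) (Ico (0:ℝ) 1) := by
      intro k hk
      have h1 := hinner k hk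
      have hkx : (0:ℝ) < k * x := by linarith
      refine ⟨div_nonneg (by linarith) hkx.le, ?_⟩
      rw [div_lt_one hkx]; linarith
    have hF : ContinuousOn
        (fun k : ℝ => |φ ((k*x-1)/(k*x)) / φ ((x-1)/x) - k ^ ρ|) (Icc (1/4:ℝ) 1) := by
      refine ContinuousOn.abs (ContinuousOn.sub ?_ ?_)
      · exact (hcont.comp hc1 hmaps).div_const _
      · intro k hk
        exact (Real.continuousAt_rpow_const k ρ (Or.inr hρ.le)).continuousWithinAt
    have : S x = Icc (1/4:ℝ) 1 ∩
        (fun k : ℝ => |φ ((k*x-1)/(k*x)) / φ ((x-1)/x) - k ^ ρ|) ⁻¹' Iic ε := by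
      ext k; simp [hSdef, and_comm]
    rw [this]
    exact hF.preimage_isClosed_of_isClosed isClosed_Icc isClosed_Iic
  have closed_A : ∀ mm, IsClosed (A mm) := by
    intro mm
    refine isClosed_Icc.inter (isClosed_iInter fun x => isClosed_iInter fun hx4 =>
      isClosed_iInter fun _ => closed_S x hx4)
  have hmono : Monotone A := by
    intro m m' hmm k hk
    rw [memA] at hk ⊢
    exact ⟨hk.1, fun x hx4 hxm => hk.2 x hx4 (le_trans (by exact_mod_cast Nat.cast_le.2 hmm) hxm)⟩
  have hU : (⋃ mm, A mm) = Icc (1/4:ℝ) 1 := by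
    apply Subset.antisymm
    · exact iUnion_subset fun mm k hk => ((memA mm k).1 hk).1
    · intro k hk
      have hk0 : (0:ℝ) < k := lt_of_lt_of_le (by norm_num) hk.1
      have := (hreg k hk0)
      rw [Metric.tendsto_atTop] at this
      obtain ⟨X, hX⟩ := this ε hε
      refine mem_iUnion.2 ⟨⌈X⌉₊, (memA _ _).2 ⟨hk, ?_⟩⟩
      intro x hx4 hxm
      have := hX x (le_trans (Nat.le_ceil X) hxm)
      rw [Real.dist_eq] at this
      exact this.le
  have htend : Tendsto (fun mm => volume (A mm)) atTop (𝓝 (ENNReal.ofReal (3/4))) := by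
    have := tendsto_measure_iUnion_atTop (μ := volume) hmono
    rwa [hU, Real.volume_Icc, show (1:ℝ) - 1/4 = 3/4 by norm_num] at this
  have hlt : ENNReal.ofReal (7/10) < ENNReal.ofReal (3/4) := by
    rw [ENNReal.ofReal_lt_ofReal_iff (by norm_num)]; norm_num
  have hev := (htend.eventually (eventually_gt_nhds hlt)).and (eventually_ge_atTop 4)
  obtain ⟨m, hvol, hm4⟩ := hev.exists
  set E : Set ℝ := A m with hEdef
  have hEclosed : IsClosed E := closed_A m
  have hEsub : E ⊆ Icc (1/4:ℝ) 1 := fun k hk => ((memA m k).1 hk).1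
  have hEbound : ∀ k ∈ E, ∀ x : ℝ, (m:ℝ) ≤ x →
      b/2 ≤ φ ((k*x-1)/(k*x)) / φ ((x-1)/x) ∧
      φ ((k*x-1)/(k*x)) / φ ((x-1)/x) ≤ 3/2 := by
    intro k hk x hx
    have hkIcc := hEsub hk
    have hx4 : (4:ℝ) ≤ x := le_trans (by exact_mod_cast Nat.cast_le.2 hm4) hx
    have habs := ((memA m k).1 hk).2 x hx4 hx
    have hbk : b ≤ k ^ ρ :=
      Real.rpow_le_rpow (by norm_num) hkIcc.1 hρ.le
    have hk1 : k ^ ρ ≤ 1 :=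
      Real.rpow_le_one (le_trans (by norm_num) hkIcc.1) hkIcc.2 hρ.le
    have hε1 : ε ≤ b/2 := min_le_left _ _
    have hε2 : ε ≤ 1/2 := min_le_right _ _
    rw [abs_le] at habs
    constructor <;> linarith [habs.1, habs.2]
  refine ⟨b/3, 3/b, (m:ℝ), by positivity, by positivity,
    le_trans (by exact_mod_cast Nat.cast_le.2 hm4) le_rfl, ?_⟩
  intro x hx k hk
  have hm4' : (4:ℝ) ≤ (m:ℝ) := by exact_mod_cast Nat.cast_le.2 hm4
  have hx4 : (4:ℝ) ≤ x := le_trans hm4' hx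
  have hxpos : (0:ℝ) < x := by linarith
  have hkpos : (0:ℝ) < k := lt_of_lt_of_le (by norm_num) hk.1
  -- find u = k * v with u, v ∈ E
  have hmeasE : MeasurableSet E := hEclosed.measurableSet
  have hmeaskE : MeasurableSet (k • E : Set ℝ) :=
    (hEclosed.smul_of_ne_zero hkpos.ne').measurableSet
  have hsmulvol : volume (k • E : Set ℝ) = ENNReal.ofReal k * volume E := by
    rw [Measure.addHaar_smul_of_nonneg volume hkpos.le]
    simp
  have hne : volume (E ∩ (k • E : Set ℝ)) ≠ 0 := by
    intro h0
    have h1 := measure_union_add_inter (μ := volume) E hmeaskE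
    rw [h0, add_zero] at h1
    have hunion_sub : E ∪ (k • E : Set ℝ) ⊆ Icc (1/8:ℝ) 1 := by
      rintro u (hu | hu)
      · have := hEsub hu; exact ⟨le_trans (by norm_num) this.1, this.2⟩
      · obtain ⟨w, hw, rfl⟩ := hu
        have hwI := hEsub hw
        simp only [smul_eq_mul]
        constructor
        · calc (1/8:ℝ) = (1/2)*(1/4) := by norm_num
          _ ≤ k * w := mul_le_mul hk.1 hwI.1 (by norm_num) (by linarith [hk.1])
        · calc k * w ≤ 1 * 1 := mul_le_mul hk.2 hwI.2 (le_trans (by norm_num) hwI.1) (by norm_num)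
          _ = 1 := by norm_num
    have h2 : volume (E ∪ (k • E : Set ℝ)) ≤ ENNReal.ofReal (7/8) := by
      refine le_trans (measure_mono hunion_sub) ?_
      rw [Real.volume_Icc]
      exact ENNReal.ofReal_le_ofReal (by norm_num)
    have h3 : ENNReal.ofReal (7/10) + ENNReal.ofReal (7/20) ≤ volume E + volume (k • E : Set ℝ) := by
      refine add_le_add hvol.le ?_
      rw [hsmulvol, show ENNReal.ofReal (7/20) = ENNReal.ofReal (1/2) * ENNReal.ofReal (7/10) by
        rw [← ENNReal.ofReal_mul (by norm_num)]; norm_num]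
      exact mul_le_mul' (ENNReal.ofReal_le_ofReal hk.1) hvol.le
    rw [← h1] at h3
    rw [← ENNReal.ofReal_add (by norm_num) (by norm_num)] at h3
    have := le_trans h3 h2
    rw [ENNReal.ofReal_le_ofReal_iff (by norm_num)] at this
    norm_num at this
  obtain ⟨u, huE, hukE⟩ := nonempty_of_measure_ne_zero hne
  obtain ⟨v, hvE, hvu⟩ := mem_smul_set.1 hukE
  have hvI := hEsub hvE
  have hvpos : (0:ℝ) < v := lt_of_lt_of_le (by norm_num) hvI.1
  set y := x / v with hydef
  have hyx : x ≤ y := by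
    rw [hydef, le_div_iff₀ hvpos]
    nlinarith [hvI.2]
  have hym : (m:ℝ) ≤ y := le_trans hx hyx
  have h1 := hEbound u huE y hym
  have h2 := hEbound v hvE y hym
  have e1 : v * y = x := by rw [hydef]; field_simp [hvpos.ne']
  have e2 : u * y = k * x := by
    rw [← hvu]; simp only [smul_eq_mul, hydef]; field_simp
  rw [e2] at h1
  rw [e1] at h2
  have hy1 : (1:ℝ) ≤ y := le_trans (by linarith) hyx
  have hRpos : 0 < φ ((y-1)/y) := psi_pos y hy1
  have hQpos : 0 < φ ((x-1)/x) := psi_pos x (by linarith)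
  have h1l : b/2 * φ ((y-1)/y) ≤ φ ((k*x-1)/(k*x)) := (le_div_iff₀ hRpos).1 h1.1
  have h1u : φ ((k*x-1)/(k*x)) ≤ 3/2 * φ ((y-1)/y) := (div_le_iff₀ hRpos).1 h1.2
  have h2l : b/2 * φ ((y-1)/y) ≤ φ ((x-1)/x) := (le_div_iff₀ hRpos).1 h2.1
  have h2u : φ ((x-1)/x) ≤ 3/2 * φ ((y-1)/y) := (div_le_iff₀ hRpos).1 h2.2
  constructor
  · nlinarith [hb, hRpos, hQpos]
  · rw [div_mul_eq_mul_div, le_div_iff₀ hb]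
    nlinarith [hb, hRpos, hQpos]


theorem omega_n_asymp_for_regularly_varying
    (φ : ℝ → ℝ) (ρ : ℝ) (hρ : 0 < ρ)
    (hcont : ContinuousOn φ (Ico (0:ℝ) 1))
    (hpos : ∀ t ∈ Ico (0:ℝ) 1, 0 < φ t)
    (hreg : ∀ k : ℝ, 0 < k →
      Tendsto (fun x : ℝ => φ ((k * x - 1) / (k * x)) / φ ((x - 1) / x))
        atTop (𝓝 (k ^ ρ)))
    (ω : ℕ → ℝ)
    (hω : ∀ n : ℕ, ω n = ((1/2 : ℝ) ^ n) ^ (1/2 : ℝ) *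
      Real.sqrt (∫ s in Ioo (1 - (1/2 : ℝ) ^ (n - 1)) (1 - (1/2 : ℝ) ^ n), φ s ^ 2)) :
    ∃ c C : ℝ, 0 < c ∧ 0 < C ∧ ∃ N : ℕ, ∀ n : ℕ, N ≤ n →
      c * ((1/2 : ℝ) ^ n * φ (1 - (1/2 : ℝ) ^ n)) ≤ ω n ∧
      ω n ≤ C * ((1/2 : ℝ) ^ n * φ (1 - (1/2 : ℝ) ^ n)) := by
  obtain ⟨c₀, C₀, X, hc₀, hC₀, hX4, hkey⟩ := rv_key φ ρ hρ hcont hpos hreg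
  obtain ⟨N₀, hN₀⟩ : ∃ N₀ : ℕ, X < 2 ^ N₀ := pow_unbounded_of_one_lt X one_lt_two
  refine ⟨c₀, C₀, hc₀, hC₀, max N₀ 1, ?_⟩
  intro n hn
  have hn1 : 1 ≤ n := le_trans (le_max_right _ _) hn
  have hxX : X ≤ (2:ℝ) ^ n :=
    le_trans hN₀.le (pow_le_pow_right₀ one_le_two (le_trans (le_max_left _ _) hn))
  set a := 1 - (1/2:ℝ) ^ (n-1) with hadef
  set b := 1 - (1/2:ℝ) ^ n with hbdef
  have hhalf : (1/2:ℝ)^(n-1) = 2 * (1/2)^n := by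
    have h : n = n - 1 + 1 := (Nat.succ_pred_eq_of_pos hn1).symm
    conv_rhs => rw [h]
    rw [pow_succ]; ring
  have hbpos : (0:ℝ) < (1/2:ℝ)^n := by positivity
  have h2n : (0:ℝ) < (2:ℝ)^n := by positivity
  have ha0 : 0 ≤ a := by
    have h1 : (1/2:ℝ)^(n-1) ≤ 1 := pow_le_one₀ (by norm_num) (by norm_num)
    rw [hadef]; linarith
  have hab : a < b := by rw [hadef, hbdef, hhalf]; linarith
  have hb1 : b < 1 := by rw [hbdef]; linarith
  have hsub : Icc a b ⊆ Ico (0:ℝ) 1 := fun s hs => ⟨le_trans ha0 hs.1, lt_of_le_of_lt hs.2 hb1⟩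
  have hφb : 0 < φ b := hpos b (hsub ⟨hab.le, le_rfl⟩)
  have hxb : ((2:ℝ)^n - 1)/(2:ℝ)^n = b := by
    have h2 : (1/2:ℝ)^n = ((2:ℝ)^n)⁻¹ := by rw [one_div, inv_pow]
    rw [hbdef, h2]; field_simp
  have hinv : (1/2:ℝ)^n * (2:ℝ)^n = 1 := by
    rw [one_div, inv_pow, inv_mul_cancel₀ (ne_of_gt h2n)]
  have hpt : ∀ s ∈ Icc a b, c₀ * φ b ≤ φ s ∧ φ s ≤ C₀ * φ b := by
    intro s hs
    have hs1 : s < 1 := lt_of_le_of_lt hs.2 hb1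
    have h1s : 0 < 1 - s := by linarith
    set k := 1 / ((1-s) * (2:ℝ)^n) with hkdef
    have hlow : (1/2:ℝ)^n ≤ 1 - s := by
      have := hs.2; rw [hbdef] at this; linarith
    have hhigh : 1 - s ≤ 2 * (1/2:ℝ)^n := by
      have := hs.1; rw [hadef, hhalf] at this; linarith
    have hprod1 : (1:ℝ) ≤ (1-s) * (2:ℝ)^n := by nlinarith
    have hprod2 : (1-s) * (2:ℝ)^n ≤ 2 := by nlinarith
    have hprodpos : (0:ℝ) < (1-s) * (2:ℝ)^n := by positivity
    have hkmem : k ∈ Icc (1/2:ℝ) 1 := by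
      rw [hkdef]
      constructor
      · rw [le_div_iff₀ hprodpos]; linarith
      · rw [div_le_one hprodpos]; linarith
    have hkx : k * (2:ℝ)^n = 1/(1-s) := by
      rw [hkdef]; field_simp
    have hmain := hkey ((2:ℝ)^n) hxX k hkmem
    rw [hxb] at hmain
    have hs' : (k * (2:ℝ)^n - 1)/(k * (2:ℝ)^n) = s := by
      rw [hkx]; field_simp; ring
    rw [hs'] at hmain
    exact hmain
  have hIcont : ContinuousOn (fun s => φ s ^ 2) (Icc a b) := (hcont.mono hsub).pow 2
  have hInt : IntegrableOn (fun s => φ s ^ 2) (Ioo a b) volume :=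
    hIcont.integrableOn_Icc.mono_set Ioo_subset_Icc_self
  have hvol : (volume (Ioo a b)).toReal = (1/2:ℝ)^n := by
    rw [Real.volume_Ioo, ENNReal.toReal_ofReal (by linarith)]
    rw [hadef, hbdef, hhalf]; ring
  have hconstInt : ∀ r : ℝ, IntegrableOn (fun _ => r) (Ioo a b) volume := by
    intro r
    exact integrableOn_const (by rw [Real.volume_Ioo]; exact ENNReal.ofReal_ne_top)
  set I := ∫ s in Ioo a b, φ s ^ 2 with hIdef
  have hlower : (1/2:ℝ)^n * (c₀ * φ b)^2 ≤ I := by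
    have hpt2 : ∀ s ∈ Ioo a b, (fun _ => (c₀ * φ b)^2) s ≤ (fun s => φ s ^ 2) s := by
      intro s hs
      exact pow_le_pow_left₀ (by positivity) (hpt s (Ioo_subset_Icc_self hs)).1 2
    have hmono := setIntegral_mono_on (hconstInt ((c₀ * φ b)^2)) hInt measurableSet_Ioo hpt2
    rwa [setIntegral_const, measureReal_def, hvol, smul_eq_mul] at hmono
  have hupper : I ≤ (1/2:ℝ)^n * (C₀ * φ b)^2 := by
    have hpt2 : ∀ s ∈ Ioo a b, (fun s => φ s ^ 2) s ≤ (fun _ => (C₀ * φ b)^2) s := by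
      intro s hs
      have hsφ : 0 ≤ φ s := (hpos s (hsub (Ioo_subset_Icc_self hs))).le
      exact pow_le_pow_left₀ hsφ (hpt s (Ioo_subset_Icc_self hs)).2 2
    have hmono := setIntegral_mono_on hInt (hconstInt ((C₀ * φ b)^2)) measurableSet_Ioo hpt2
    rwa [setIntegral_const, measureReal_def, hvol, smul_eq_mul] at hmono
  rw [hω n, ← hadef, ← hbdef, ← hIdef, ← Real.sqrt_eq_rpow, ← Real.sqrt_mul hbpos.le]
  constructor
  · have h1 : (c₀ * ((1/2:ℝ)^n * φ b))^2 ≤ (1/2:ℝ)^n * I := by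
      have := mul_le_mul_of_nonneg_left hlower hbpos.le
      calc (c₀ * ((1/2:ℝ)^n * φ b))^2 = (1/2:ℝ)^n * ((1/2:ℝ)^n * (c₀ * φ b)^2) := by ring
      _ ≤ (1/2:ℝ)^n * I := this
    calc c₀ * ((1/2:ℝ)^n * φ b) = Real.sqrt ((c₀ * ((1/2:ℝ)^n * φ b))^2) :=
          (Real.sqrt_sq (by positivity)).symm
    _ ≤ Real.sqrt ((1/2:ℝ)^n * I) := Real.sqrt_le_sqrt h1
  · have h2 : (1/2:ℝ)^n * I ≤ (C₀ * ((1/2:ℝ)^n * φ b))^2 := by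
      have := mul_le_mul_of_nonneg_left hupper hbpos.le
      calc (1/2:ℝ)^n * I ≤ (1/2:ℝ)^n * ((1/2:ℝ)^n * (C₀ * φ b)^2) := this
      _ = (C₀ * ((1/2:ℝ)^n * φ b))^2 := by ring
    calc Real.sqrt ((1/2:ℝ)^n * I) ≤ Real.sqrt ((C₀ * ((1/2:ℝ)^n * φ b))^2) :=
          Real.sqrt_le_sqrt h2
    _ = C₀ * ((1/2:ℝ)^n * φ b) := Real.sqrt_sq (by positivity)
end

section
/- Let κ, φ : (a,b) → ℂ be measurable with κ ∈ L², c_n the dyadic points with ‖1_{(c_n,b)}κ‖² = 2^{-n}‖κ‖², J_n = (c_{n-1}, c_n), and Ω(t) = ‖1_{(t,b)}κ‖·‖1_{(a,t)}φ‖, ω_n = ‖1_{J_n}κ‖·‖1_{J_n}φ‖. Then for every t ∈ J_n with n ≥ 2: Ω(t) ≥ ω_{n-1}/2. -/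
open MeasureTheory Set

theorem Omega_lower_bound_on_dyadic_cell
    (a b : ℝ) (hab : a < b) (κ φ : ℝ → ℂ)
    (hκmeas : Measurable κ) (hφmeas : Measurable φ)
    (hκL2 : IntegrableOn (fun s => ‖κ s‖ ^ 2) (Ioo a b))
    (hκpos : 0 < ∫ s in Ioo a b, ‖κ s‖ ^ 2)
    (hφL2 : ∀ c ∈ Ioo a b, IntegrableOn (fun s => ‖φ s‖ ^ 2) (Ioo a c))
    (c : ℕ → ℝ) (hc0 : c 0 = a) (hcmono : StrictMono c) (hcb : ∀ n, c n < b)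
    (htail : ∀ n, ∫ s in Ioo (c n) b, ‖κ s‖ ^ 2
      = (1/2 : ℝ) ^ n * ∫ s in Ioo a b, ‖κ s‖ ^ 2)
    (Ω : ℝ → ℝ)
    (hΩ : ∀ t, Ω t = Real.sqrt (∫ s in Ioo t b, ‖κ s‖ ^ 2) *
      Real.sqrt (∫ s in Ioo a t, ‖φ s‖ ^ 2))
    (ω : ℕ → ℝ)
    (hω : ∀ n, ω n = Real.sqrt (∫ s in Ioo (c (n - 1)) (c n), ‖κ s‖ ^ 2) *
      Real.sqrt (∫ s in Ioo (c (n - 1)) (c n), ‖φ s‖ ^ 2)) :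
    ∀ n : ℕ, 2 ≤ n → ∀ t ∈ Ioo (c (n - 1)) (c n), ω (n - 1) / 2 ≤ Ω t := by
  rintro n hn t ⟨ht1, ht2⟩
  obtain ⟨m, rfl⟩ := Nat.exists_eq_add_of_le hn
  have h1 : 2 + m - 1 = m + 1 := by omega
  have h2 : m + 1 - 1 = m := by omega
  simp only [h1] at ht1 ht2 ⊢
  rw [hΩ, hω, h2]
  set I := ∫ s in Ioo a b, ‖κ s‖ ^ 2 with hI
  set A := ∫ s in Ioo t b, ‖κ s‖ ^ 2 with hA
  set B := ∫ s in Ioo a t, ‖φ s‖ ^ 2 with hB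
  set K := ∫ s in Ioo (c m) (c (m + 1)), ‖κ s‖ ^ 2 with hK
  set P := ∫ s in Ioo (c m) (c (m + 1)), ‖φ s‖ ^ 2 with hP
  have hca : ∀ k, a ≤ c k := fun k => hc0 ▸ hcmono.monotone (Nat.zero_le k)
  have hta : a < t := lt_of_le_of_lt (hca _) ht1
  have htb : t < b := ht2.trans (hcb _)
  have hκnn : (0 : ℝ → ℝ) ≤ᵐ[volume.restrict (Ioo t b)] fun s => ‖κ s‖ ^ 2 :=
    Filter.Eventually.of_forall fun s => by positivity
  have hκnn' : (0 : ℝ → ℝ) ≤ᵐ[volume.restrict (Ioo (c m) b)] fun s => ‖κ s‖ ^ 2 :=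
    Filter.Eventually.of_forall fun s => by positivity
  have hφnn : (0 : ℝ → ℝ) ≤ᵐ[volume.restrict (Ioo a t)] fun s => ‖φ s‖ ^ 2 :=
    Filter.Eventually.of_forall fun s => by positivity
  -- A ≥ tail at c (m+2) = (1/2)^(m+2) I
  have hAge : ((1 / 2 : ℝ)) ^ (2 + m) * I ≤ A := by
    have hsub : Ioo (c (2 + m)) b ⊆ Ioo t b := fun x hx => ⟨ht2.trans hx.1, hx.2⟩
    have := setIntegral_mono_set (hκL2.mono_set (fun x hx => ⟨hta.trans hx.1, hx.2⟩))
      hκnn hsub.eventuallyLE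
    calc ((1/2:ℝ)) ^ (2 + m) * I = ∫ s in Ioo (c (2 + m)) b, ‖κ s‖ ^ 2 := (htail _).symm
      _ ≤ A := this
  -- K ≤ tail at c m = (1/2)^m I
  have hKle : K ≤ (1 / 2 : ℝ) ^ m * I := by
    have hsub : Ioo (c m) (c (m + 1)) ⊆ Ioo (c m) b := fun x hx => ⟨hx.1, hx.2.trans (hcb _)⟩
    have := setIntegral_mono_set
      (hκL2.mono_set (fun x hx => ⟨lt_of_le_of_lt (hca m) hx.1, hx.2⟩)) hκnn' hsub.eventuallyLE
    calc K ≤ ∫ s in Ioo (c m) b, ‖κ s‖ ^ 2 := this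
      _ = (1/2:ℝ) ^ m * I := htail _
  have hK4A : K ≤ 4 * A := by
    have : (1 / 2 : ℝ) ^ m * I = 4 * ((1 / 2 : ℝ) ^ (2 + m) * I) := by ring
    linarith [hKle, this ▸ hKle]
  have hPB : P ≤ B := by
    have hsub : Ioo (c m) (c (m + 1)) ⊆ Ioo a t := fun x hx =>
      ⟨lt_of_le_of_lt (hca m) hx.1, hx.2.trans ht1⟩
    exact setIntegral_mono_set (hφL2 t ⟨hta, htb⟩) hφnn hsub.eventuallyLE
  have hsqA : Real.sqrt K ≤ 2 * Real.sqrt A := by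
    have h4 : Real.sqrt (4 * A) = 2 * Real.sqrt A := by
      rw [Real.sqrt_mul (by norm_num : (0:ℝ) ≤ 4), show Real.sqrt 4 = 2 by
        rw [show (4:ℝ) = 2 ^ 2 by norm_num, Real.sqrt_sq (by norm_num : (0:ℝ) ≤ 2)]]
    calc Real.sqrt K ≤ Real.sqrt (4 * A) := Real.sqrt_le_sqrt hK4A
      _ = 2 * Real.sqrt A := h4
  have hsqB : Real.sqrt P ≤ Real.sqrt B := Real.sqrt_le_sqrt hPB
  have : Real.sqrt K * Real.sqrt P ≤ (2 * Real.sqrt A) * Real.sqrt B :=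
    mul_le_mul hsqA hsqB (Real.sqrt_nonneg _) (by positivity)
  nlinarith [Real.sqrt_nonneg A, Real.sqrt_nonneg B]
end

section
/- With the dyadic setup for κ, φ on (a,b), for every t ∈ J_n: Ω(t) ≤ (∑_{k=1}^n ‖1_{J_k}φ‖) · 2^{-(n-1)/2} ‖κ‖, where Ω(t) = ‖1_{(t,b)}κ‖·‖1_{(a,t)}φ‖. -/
open MeasureTheory Set

private lemma sqrt_add_le' (x y : ℝ) (hx : 0 ≤ x) (hy : 0 ≤ y) :
    Real.sqrt (x + y) ≤ Real.sqrt x + Real.sqrt y := by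
  have h : x + y ≤ (Real.sqrt x + Real.sqrt y) ^ 2 := by
    rw [add_sq, Real.sq_sqrt hx, Real.sq_sqrt hy]
    nlinarith [Real.sqrt_nonneg x, Real.sqrt_nonneg y]
  calc Real.sqrt (x + y) ≤ Real.sqrt ((Real.sqrt x + Real.sqrt y) ^ 2) :=
        Real.sqrt_le_sqrt h
    _ = Real.sqrt x + Real.sqrt y := by
        rw [Real.sqrt_sq (by positivity)]

private lemma sqrt_sum_le_sum_sqrt (s : Finset ℕ) (f : ℕ → ℝ) (hf : ∀ i ∈ s, 0 ≤ f i) :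
    Real.sqrt (∑ i ∈ s, f i) ≤ ∑ i ∈ s, Real.sqrt (f i) := by
  induction s using Finset.cons_induction with
  | empty => simp
  | cons i s his ih =>
    rw [Finset.sum_cons, Finset.sum_cons]
    have h1 : 0 ≤ f i := hf i (Finset.mem_cons_self _ _)
    have h2 : 0 ≤ ∑ j ∈ s, f j :=
      Finset.sum_nonneg fun j hj => hf j (Finset.mem_cons_of_mem hj)
    calc Real.sqrt (f i + ∑ j ∈ s, f j)
        ≤ Real.sqrt (f i) + Real.sqrt (∑ j ∈ s, f j) := sqrt_add_le' _ _ h1 h2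
      _ ≤ Real.sqrt (f i) + ∑ j ∈ s, Real.sqrt (f j) := by
          gcongr
          exact ih fun j hj => hf j (Finset.mem_cons_of_mem hj)

theorem Omega_upper_bound_on_dyadic_cell
    (a b : ℝ) (hab : a < b) (κ φ : ℝ → ℂ)
    (hκmeas : Measurable κ) (hφmeas : Measurable φ)
    (hκL2 : IntegrableOn (fun s => ‖κ s‖ ^ 2) (Ioo a b))
    (hκpos : 0 < ∫ s in Ioo a b, ‖κ s‖ ^ 2)
    (hφL2 : ∀ c ∈ Ioo a b, IntegrableOn (fun s => ‖φ s‖ ^ 2) (Ioo a c))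
    (c : ℕ → ℝ) (hc0 : c 0 = a) (hcmono : StrictMono c) (hcb : ∀ n, c n < b)
    (htail : ∀ n, ∫ s in Ioo (c n) b, ‖κ s‖ ^ 2
      = (1/2 : ℝ) ^ n * ∫ s in Ioo a b, ‖κ s‖ ^ 2)
    (Ω : ℝ → ℝ)
    (hΩ : ∀ t, Ω t = Real.sqrt (∫ s in Ioo t b, ‖κ s‖ ^ 2) *
      Real.sqrt (∫ s in Ioo a t, ‖φ s‖ ^ 2)) :
    ∀ n : ℕ, 1 ≤ n → ∀ t ∈ Ioo (c (n - 1)) (c n),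
      Ω t ≤ (∑ k ∈ Finset.Icc 1 n,
          Real.sqrt (∫ s in Ioo (c (k - 1)) (c k), ‖φ s‖ ^ 2)) *
        ((2 : ℝ) ^ (-(((n : ℝ) - 1) / 2)) * Real.sqrt (∫ s in Ioo a b, ‖κ s‖ ^ 2)) := by
  intro n hn t ht
  obtain ⟨m, rfl⟩ : ∃ m, n = m + 1 := ⟨n - 1, (Nat.succ_pred_eq_of_pos hn).symm⟩
  simp only [Nat.add_sub_cancel] at ht
  set K := ∫ s in Ioo a b, ‖κ s‖ ^ 2 with hK
  have hK0 : 0 ≤ K := le_of_lt hκpos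
  have hca : ∀ k, a ≤ c k := fun k => hc0 ▸ hcmono.monotone (Nat.zero_le k)
  have hcapos : ∀ k : ℕ, 0 < k → a < c k := fun k hk => hc0 ▸ hcmono hk
  -- κ-factor bound
  have hκint : IntegrableOn (fun s => ‖κ s‖ ^ 2) (Ioo (c m) b) :=
    hκL2.mono_set (Ioo_subset_Ioo_left (hca m))
  have h1 : ∫ s in Ioo t b, ‖κ s‖ ^ 2 ≤ ∫ s in Ioo (c m) b, ‖κ s‖ ^ 2 := by
    apply setIntegral_mono_set hκint
    · filter_upwards with s using by positivity
    · exact (Ioo_subset_Ioo_left (le_of_lt ht.1)).eventuallyLE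
  have hhalf : ((1/2 : ℝ) ^ m) = (2 : ℝ) ^ (-(m : ℝ)) := by
    rw [Real.rpow_neg (by norm_num), Real.rpow_natCast, one_div, inv_pow]
  have hsqrt_half : Real.sqrt ((1/2 : ℝ) ^ m) = (2 : ℝ) ^ (-((m : ℝ)) / 2) := by
    rw [hhalf, Real.sqrt_eq_rpow, ← Real.rpow_mul (by norm_num)]
    ring_nf
  have h1' : Real.sqrt (∫ s in Ioo t b, ‖κ s‖ ^ 2)
      ≤ (2 : ℝ) ^ (-((m : ℝ)) / 2) * Real.sqrt K := by
    calc Real.sqrt (∫ s in Ioo t b, ‖κ s‖ ^ 2)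
        ≤ Real.sqrt (∫ s in Ioo (c m) b, ‖κ s‖ ^ 2) := Real.sqrt_le_sqrt h1
      _ = Real.sqrt ((1/2 : ℝ) ^ m * K) := by rw [htail m]
      _ = (2 : ℝ) ^ (-((m : ℝ)) / 2) * Real.sqrt K := by
          rw [Real.sqrt_mul (by positivity), hsqrt_half]
  -- φ-factor bound
  have hint : ∀ N : ℕ, IntegrableOn (fun s => ‖φ s‖ ^ 2) (Ioo a (c (N + 1))) :=
    fun N => hφL2 (c (N + 1)) ⟨hcapos _ (Nat.succ_pos N), hcb _⟩
  have key : ∀ N : ℕ, ∫ s in Ioo a (c N), ‖φ s‖ ^ 2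
      = ∑ k ∈ Finset.Icc 1 N, ∫ s in Ioo (c (k - 1)) (c k), ‖φ s‖ ^ 2 := by
    intro N
    induction N with
    | zero => simp [hc0]
    | succ N ih =>
      have hI := hint N
      have hIa : IntervalIntegrable (fun s => ‖φ s‖ ^ 2) volume a (c N) := by
        rw [intervalIntegrable_iff_integrableOn_Ioc_of_le (hca N)]
        exact hI.mono_set fun s hs => ⟨hs.1, lt_of_le_of_lt hs.2 (hcmono (Nat.lt_succ_self N))⟩
      have hIb : IntervalIntegrable (fun s => ‖φ s‖ ^ 2) volume (c N) (c (N + 1)) := by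
        rw [intervalIntegrable_iff_integrableOn_Ioc_of_le (le_of_lt (hcmono (Nat.lt_succ_self N)))]
        apply hI.mono_set_ae
        exact Ioo_ae_eq_Ioc.symm.le.trans (Ioo_subset_Ioo_left (hca N)).eventuallyLE
      have hsplit : ∫ s in Ioo a (c (N + 1)), ‖φ s‖ ^ 2
          = (∫ s in Ioo a (c N), ‖φ s‖ ^ 2) + ∫ s in Ioo (c N) (c (N + 1)), ‖φ s‖ ^ 2 := by
        rw [← integral_Ioc_eq_integral_Ioo, ← integral_Ioc_eq_integral_Ioo,
          ← integral_Ioc_eq_integral_Ioo,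
          ← intervalIntegral.integral_of_le (hca N),
          ← intervalIntegral.integral_of_le (le_of_lt (hcmono (Nat.lt_succ_self N))),
          ← intervalIntegral.integral_of_le (hca (N + 1))]
        exact (intervalIntegral.integral_add_adjacent_intervals hIa hIb).symm
      rw [hsplit, ih, Finset.sum_Icc_succ_top (Nat.one_le_iff_ne_zero.mpr (Nat.succ_ne_zero N))]
      simp
  have hφint : IntegrableOn (fun s => ‖φ s‖ ^ 2) (Ioo a (c (m + 1))) := hint m
  have h2 : ∫ s in Ioo a t, ‖φ s‖ ^ 2 ≤ ∫ s in Ioo a (c (m + 1)), ‖φ s‖ ^ 2 := by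
    apply setIntegral_mono_set hφint
    · filter_upwards with s using by positivity
    · exact (Ioo_subset_Ioo_right (le_of_lt ht.2)).eventuallyLE
  have h2' : Real.sqrt (∫ s in Ioo a t, ‖φ s‖ ^ 2)
      ≤ ∑ k ∈ Finset.Icc 1 (m + 1), Real.sqrt (∫ s in Ioo (c (k - 1)) (c k), ‖φ s‖ ^ 2) := by
    calc Real.sqrt (∫ s in Ioo a t, ‖φ s‖ ^ 2)
        ≤ Real.sqrt (∫ s in Ioo a (c (m + 1)), ‖φ s‖ ^ 2) := Real.sqrt_le_sqrt h2
      _ = Real.sqrt (∑ k ∈ Finset.Icc 1 (m + 1), ∫ s in Ioo (c (k - 1)) (c k), ‖φ s‖ ^ 2) := by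
          rw [key (m + 1)]
      _ ≤ _ := sqrt_sum_le_sum_sqrt _ _ fun k _ =>
          setIntegral_nonneg measurableSet_Ioo fun s _ => by positivity
  -- combine
  have hexp : (2 : ℝ) ^ (-(((↑(m + 1) : ℝ) - 1) / 2)) = (2 : ℝ) ^ (-((m : ℝ)) / 2) := by
    congr 1
    push_cast
    ring
  rw [hΩ t, hexp]
  calc Real.sqrt (∫ s in Ioo t b, ‖κ s‖ ^ 2) * Real.sqrt (∫ s in Ioo a t, ‖φ s‖ ^ 2)
      ≤ ((2 : ℝ) ^ (-((m : ℝ)) / 2) * Real.sqrt K) *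
        (∑ k ∈ Finset.Icc 1 (m + 1), Real.sqrt (∫ s in Ioo (c (k - 1)) (c k), ‖φ s‖ ^ 2)) := by
        apply mul_le_mul h1' h2' (Real.sqrt_nonneg _) (by positivity)
    _ = _ := by ring
end

section
/- With the dyadic setup, lim_{n→∞} ω_n = 0 if and only if lim_{t↗b} ‖1_{(a,t)}φ‖·‖1_{(t,b)}κ‖ = 0, where ω_n = ‖1_{J_n}κ‖·‖1_{J_n}φ‖. -/
open MeasureTheory Set Filter Topology

private lemma my_split (f : ℝ → ℝ) (x y z : ℝ) (hxy : x ≤ y) (hyz : y ≤ z)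
    (hf : IntegrableOn f (Ioo x z)) :
    ∫ s in Ioo x z, f s = (∫ s in Ioo x y, f s) + ∫ s in Ioo y z, f s := by
  have h1 : IntervalIntegrable f volume x y :=
    (intervalIntegrable_iff_integrableOn_Ioo_of_le hxy).mpr
      (hf.mono_set (Ioo_subset_Ioo le_rfl hyz))
  have h2 : IntervalIntegrable f volume y z :=
    (intervalIntegrable_iff_integrableOn_Ioo_of_le hyz).mpr
      (hf.mono_set (Ioo_subset_Ioo hxy le_rfl))
  have := intervalIntegral.integral_add_adjacent_intervals h1 h2
  rw [intervalIntegral.integral_of_le hxy, intervalIntegral.integral_of_le hyz,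
    intervalIntegral.integral_of_le (hxy.trans hyz),
    integral_Ioc_eq_integral_Ioo, integral_Ioc_eq_integral_Ioo,
    integral_Ioc_eq_integral_Ioo] at this
  linarith

private lemma my_conv (u : ℕ → ℝ) (hu : ∀ n, 0 ≤ u n) (h : Tendsto u atTop (𝓝 0)) :
    Tendsto (fun n => (1/2 : ℝ) ^ n * ∑ k ∈ Finset.range (n+1), 2 ^ k * u k)
      atTop (𝓝 0) := by
  rw [Metric.tendsto_atTop] at h ⊢
  intro ε hε
  obtain ⟨N₁, hN₁⟩ := h (ε/4) (by linarith)
  set A : ℝ := ∑ k ∈ Finset.range N₁, 2 ^ k * u k with hA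
  have hA0 : 0 ≤ A := Finset.sum_nonneg fun k _ => mul_nonneg (by positivity) (hu k)
  have htend : Tendsto (fun n : ℕ => (1/2 : ℝ) ^ n * A) atTop (𝓝 0) := by
    simpa using (tendsto_pow_atTop_nhds_zero_of_lt_one (by norm_num : (0:ℝ) ≤ 1/2)
      (by norm_num : (1/2 : ℝ) < 1)).mul_const A
  rw [Metric.tendsto_atTop] at htend
  obtain ⟨N₂, hN₂⟩ := htend (ε/2) (by linarith)
  refine ⟨max N₁ N₂, fun n hn => ?_⟩
  have hn1 : N₁ ≤ n := le_trans (le_max_left _ _) hn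
  have hn2 : N₂ ≤ n := le_trans (le_max_right _ _) hn
  have hsplit := Finset.sum_range_add_sum_Ico (fun k => (2:ℝ)^k * u k)
    (Nat.le_succ_of_le hn1)
  have hIco : ∑ k ∈ Finset.Ico N₁ (n+1), (2:ℝ)^k * u k ≤ (ε/4) * 2^(n+1) := by
    calc ∑ k ∈ Finset.Ico N₁ (n+1), (2:ℝ)^k * u k
        ≤ ∑ k ∈ Finset.Ico N₁ (n+1), (ε/4) * 2^k := by
          refine Finset.sum_le_sum fun k hk => ?_
          have := hN₁ k (Finset.mem_Ico.mp hk).1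
          rw [Real.dist_eq, sub_zero, abs_of_nonneg (hu k)] at this
          have h2k : (0:ℝ) < 2^k := by positivity
          nlinarith [hu k]
      _ ≤ ∑ k ∈ Finset.range (n+1), (ε/4) * 2^k := by
          refine Finset.sum_le_sum_of_subset_of_nonneg ?_ (fun k _ _ => by positivity)
          rw [Finset.range_eq_Ico]; exact Finset.Ico_subset_Ico (Nat.zero_le _) le_rfl
      _ = (ε/4) * ∑ k ∈ Finset.range (n+1), (2:ℝ)^k := by rw [Finset.mul_sum]
      _ ≤ (ε/4) * 2^(n+1) := by
          have : ∑ k ∈ Finset.range (n+1), (2:ℝ)^k = 2^(n+1) - 1 := by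
            rw [geom_sum_eq (by norm_num)]; ring
          rw [this]; nlinarith [pow_pos (by norm_num : (0:ℝ) < 2) (n+1)]
  have hpow : (0:ℝ) < (1/2)^n := by positivity
  have hA2 := hN₂ n hn2
  rw [Real.dist_eq, sub_zero, abs_of_nonneg (mul_nonneg (by positivity) hA0)] at hA2
  rw [Real.dist_eq, sub_zero]
  have hval : (1/2:ℝ)^n * ∑ k ∈ Finset.range (n+1), 2^k * u k
      = (1/2)^n * A + (1/2)^n * ∑ k ∈ Finset.Ico N₁ (n+1), 2^k * u k := by
    rw [← hsplit]; ring
  have hnn : (0:ℝ) ≤ (1/2:ℝ)^n * ∑ k ∈ Finset.range (n+1), 2^k * u k := by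
    apply mul_nonneg hpow.le
      (Finset.sum_nonneg fun k _ => mul_nonneg (by positivity) (hu k))
  rw [abs_of_nonneg hnn, hval]
  have h22 : (1/2:ℝ)^n * ((ε/4) * 2^(n+1)) = ε/2 := by
    have : (1/2:ℝ)^n * 2^(n+1) = 2 := by
      rw [pow_succ]; field_simp [← mul_pow]; rw [← mul_pow]; norm_num
    nlinarith [this]
  nlinarith [mul_le_mul_of_nonneg_left hIco hpow.le]

theorem omega_tendsto_zero_iff_Omega_tendsto_zero
    (a b : ℝ) (hab : a < b) (κ φ : ℝ → ℂ)
    (hκmeas : Measurable κ) (hφmeas : Measurable φ)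
    (hκL2 : IntegrableOn (fun s => ‖κ s‖ ^ 2) (Ioo a b))
    (hκpos : 0 < ∫ s in Ioo a b, ‖κ s‖ ^ 2)
    (hφL2 : ∀ c ∈ Ioo a b, IntegrableOn (fun s => ‖φ s‖ ^ 2) (Ioo a c))
    (c : ℕ → ℝ) (hc0 : c 0 = a) (hcmono : StrictMono c) (hcb : ∀ n, c n < b)
    (htail : ∀ n, ∫ s in Ioo (c n) b, ‖κ s‖ ^ 2
      = (1/2 : ℝ) ^ n * ∫ s in Ioo a b, ‖κ s‖ ^ 2)
    (Ω : ℝ → ℝ)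
    (hΩ : ∀ t, Ω t = Real.sqrt (∫ s in Ioo t b, ‖κ s‖ ^ 2) *
      Real.sqrt (∫ s in Ioo a t, ‖φ s‖ ^ 2))
    (ω : ℕ → ℝ)
    (hω : ∀ n, ω n = Real.sqrt (∫ s in Ioo (c (n - 1)) (c n), ‖κ s‖ ^ 2) *
      Real.sqrt (∫ s in Ioo (c (n - 1)) (c n), ‖φ s‖ ^ 2)) :
    Tendsto ω atTop (𝓝 0) ↔ Tendsto Ω (𝓝[<] b) (𝓝 0) := by
  -- abbreviations as hypotheses
  have hca : ∀ n, a ≤ c n := fun n => hc0 ▸ hcmono.monotone (Nat.zero_le n)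
  have hacn : ∀ n : ℕ, a < c (n+1) := fun n => hc0 ▸ hcmono (Nat.succ_pos n)
  have hcmem : ∀ n : ℕ, c (n+1) ∈ Ioo a b := fun n => ⟨hacn n, hcb _⟩
  -- nonnegativity of set integrals of the squared norms
  have hκnn : ∀ u v : ℝ, 0 ≤ ∫ s in Ioo u v, ‖κ s‖ ^ 2 := fun u v =>
    setIntegral_nonneg measurableSet_Ioo fun s _ => by positivity
  have hφnn : ∀ u v : ℝ, 0 ≤ ∫ s in Ioo u v, ‖φ s‖ ^ 2 := fun u v =>
    setIntegral_nonneg measurableSet_Ioo fun s _ => by positivity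
  have hωnn : ∀ n, 0 ≤ ω n := fun n => by
    rw [hω]; exact mul_nonneg (Real.sqrt_nonneg _) (Real.sqrt_nonneg _)
  have hΩnn : ∀ t, 0 ≤ Ω t := fun t => by
    rw [hΩ]; exact mul_nonneg (Real.sqrt_nonneg _) (Real.sqrt_nonneg _)
  -- integrability of κ² on tails
  have hκint : ∀ x : ℝ, a ≤ x → IntegrableOn (fun s => ‖κ s‖ ^ 2) (Ioo x b) :=
    fun x hx => hκL2.mono_set (Ioo_subset_Ioo hx le_rfl)
  -- monotonicity of the tail of κ
  have hTmono : ∀ x y : ℝ, a ≤ x → x ≤ y →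
      (∫ s in Ioo y b, ‖κ s‖ ^ 2) ≤ ∫ s in Ioo x b, ‖κ s‖ ^ 2 := by
    intro x y hax hxy
    exact setIntegral_mono_set (hκint x hax)
      (ae_of_all _ fun s => by positivity)
      (HasSubset.Subset.eventuallyLE (Ioo_subset_Ioo hxy le_rfl))
  -- monotonicity of F
  have hFmono : ∀ x y : ℝ, x ≤ y → y ∈ Ioo a b →
      (∫ s in Ioo a x, ‖φ s‖ ^ 2) ≤ ∫ s in Ioo a y, ‖φ s‖ ^ 2 := by
    intro x y hxy hy
    exact setIntegral_mono_set (hφL2 y hy)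
      (ae_of_all _ fun s => by positivity)
      (HasSubset.Subset.eventuallyLE (Ioo_subset_Ioo le_rfl hxy))
  -- the κ mass of the dyadic interval J_{n+1}
  have hκJ : ∀ n : ℕ, ∫ s in Ioo (c n) (c (n+1)), ‖κ s‖ ^ 2
      = (1/2 : ℝ) ^ (n+1) * ∫ s in Ioo a b, ‖κ s‖ ^ 2 := by
    intro n
    have hs := my_split (fun s => ‖κ s‖ ^ 2) (c n) (c (n+1)) b
      (hcmono (lt_add_one n)).le (hcb (n+1)).le (hκint (c n) (hca n))
    rw [htail n, htail (n+1)] at hs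
    have hp : (1/2:ℝ)^(n+1) = (1/2)^n * (1/2) := pow_succ _ _
    nlinarith [hs, hp]
  -- ω (n+1) squared
  have hωsq : ∀ n : ℕ, ω (n+1) ^ 2
      = (∫ s in Ioo (c n) (c (n+1)), ‖κ s‖ ^ 2) *
        (∫ s in Ioo (c n) (c (n+1)), ‖φ s‖ ^ 2) := by
    intro n
    rw [hω]
    simp only [Nat.add_sub_cancel]
    rw [mul_pow, Real.sq_sqrt (hκnn _ _), Real.sq_sqrt (hφnn _ _)]
  have hω0 : ω 0 = 0 := by
    rw [hω]
    simp
  -- the key identity : K * F (c n) = ∑_{k ≤ n} 2^k ω_k²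
  have hKF : ∀ n : ℕ, (∫ s in Ioo a b, ‖κ s‖ ^ 2) * ∫ s in Ioo a (c n), ‖φ s‖ ^ 2
      = ∑ k ∈ Finset.range (n+1), 2 ^ k * ω k ^ 2 := by
    intro n
    induction n with
    | zero => simp [hc0, hω0]
    | succ n ih =>
      have hsplit : ∫ s in Ioo a (c (n+1)), ‖φ s‖ ^ 2
          = (∫ s in Ioo a (c n), ‖φ s‖ ^ 2) + ∫ s in Ioo (c n) (c (n+1)), ‖φ s‖ ^ 2 :=
        my_split (fun s => ‖φ s‖ ^ 2) a (c n) (c (n+1))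
          (hca n) (hcmono (lt_add_one n)).le (hφL2 (c (n+1)) (hcmem n))
      have e1 : ω (n+1) ^ 2 = (1/2:ℝ)^(n+1) * (∫ s in Ioo a b, ‖κ s‖ ^ 2) *
          ∫ s in Ioo (c n) (c (n+1)), ‖φ s‖ ^ 2 := by
        rw [hωsq n, hκJ n]
      rw [Finset.sum_range_succ, ← ih, hsplit, e1]
      have h1 : (2:ℝ)^(n+1) * (1/2)^(n+1) = 1 := by
        rw [← mul_pow]; norm_num
      linear_combination (-((∫ s in Ioo a b, ‖κ s‖ ^ 2) *
        ∫ s in Ioo (c n) (c (n+1)), ‖φ s‖ ^ 2)) * h1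
  -- limit of the dyadic points
  have hbdd : BddAbove (range c) := ⟨b, by rintro x ⟨n, rfl⟩; exact (hcb n).le⟩
  have hcL : Tendsto c atTop (𝓝 (⨆ n, c n)) := tendsto_atTop_ciSup hcmono.monotone hbdd
  have hcleL : ∀ n, c n ≤ ⨆ n, c n := fun n => le_ciSup hbdd n
  have hLb : (⨆ n, c n) ≤ b := ciSup_le fun n => (hcb n).le
  have haL : a < ⨆ n, c n := lt_of_lt_of_le (hc0 ▸ hcmono Nat.zero_lt_one) (hcleL 1)
  rcases eq_or_lt_of_le hLb with hL | hL
  · -- the dyadic points converge to b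
    constructor
    · intro hωt
      have hsq : Tendsto (fun n => ω n ^ 2) atTop (𝓝 0) := by
        simpa using hωt.pow 2
      have hG := my_conv (fun n => ω n ^ 2) (fun n => sq_nonneg _) hsq
      have hG' : Tendsto (fun n => 2 * ((1/2:ℝ)^n *
          ((∫ s in Ioo a b, ‖κ s‖ ^ 2) * ∫ s in Ioo a (c n), ‖φ s‖ ^ 2)))
          atTop (𝓝 0) := by
        have h2 := hG.const_mul (2:ℝ)
        simp only [mul_zero] at h2
        refine h2.congr fun n => ?_
        rw [hKF n]
      rw [Metric.tendsto_atTop] at hG'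
      rw [Metric.tendsto_nhds]
      intro ε hε
      obtain ⟨N, hN⟩ := hG' (ε^2) (by positivity)
      have hmem : Ioo (c (N+1)) b ∈ 𝓝[<] b :=
        Ioo_mem_nhdsLT_of_mem ⟨hcb (N+1), le_rfl⟩
      filter_upwards [hmem] with t ht
      obtain ⟨htl, htb⟩ := ht
      have hex : ∃ m, t < c m := (lt_ciSup_iff hbdd).mp (hL ▸ htb)
      have htn : t < c (Nat.find hex) := Nat.find_spec hex
      have hne : Nat.find hex ≠ 0 := by
        intro h0
        rw [h0, hc0] at htn
        exact absurd htn (not_lt.mpr (((hca (N+1)).trans htl.le)))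
      obtain ⟨m, hm⟩ : ∃ m, Nat.find hex = m + 1 := Nat.exists_eq_succ_of_ne_zero hne
      rw [hm] at htn
      have hmt : c m ≤ t := not_lt.mp (Nat.find_min hex (hm ▸ Nat.lt_succ_self m))
      have hNm : N + 1 < m + 1 := hcmono.lt_iff_lt.mp (htl.trans htn)
      have hTt : (∫ s in Ioo t b, ‖κ s‖ ^ 2) ≤ ∫ s in Ioo (c m) b, ‖κ s‖ ^ 2 :=
        hTmono (c m) t (hca m) hmt
      have hFt : (∫ s in Ioo a t, ‖φ s‖ ^ 2) ≤ ∫ s in Ioo a (c (m+1)), ‖φ s‖ ^ 2 :=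
        hFmono t (c (m+1)) htn.le (hcmem m)
      have hprod : (∫ s in Ioo t b, ‖κ s‖ ^ 2) * (∫ s in Ioo a t, ‖φ s‖ ^ 2)
          ≤ (∫ s in Ioo (c m) b, ‖κ s‖ ^ 2) * ∫ s in Ioo a (c (m+1)), ‖φ s‖ ^ 2 :=
        mul_le_mul hTt hFt (hφnn _ _) (hκnn _ _)
      have hbound := hN (m+1) (by omega)
      rw [Real.dist_eq, sub_zero] at hbound
      have hval : (∫ s in Ioo (c m) b, ‖κ s‖ ^ 2) * (∫ s in Ioo a (c (m+1)), ‖φ s‖ ^ 2)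
          = 2 * ((1/2:ℝ)^(m+1) *
            ((∫ s in Ioo a b, ‖κ s‖ ^ 2) * ∫ s in Ioo a (c (m+1)), ‖φ s‖ ^ 2)) := by
        have hp : (1/2:ℝ)^m = 2 * (1/2)^(m+1) := by rw [pow_succ]; ring
        rw [htail m, hp]; ring
      have hlt : (∫ s in Ioo t b, ‖κ s‖ ^ 2) * (∫ s in Ioo a t, ‖φ s‖ ^ 2) < ε^2 :=
        lt_of_le_of_lt (hprod.trans_eq hval) (lt_of_le_of_lt (le_abs_self _) hbound)
      rw [Real.dist_eq, sub_zero, abs_of_nonneg (hΩnn t), hΩ t,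
        ← Real.sqrt_mul (hκnn _ _)]
      exact (Real.sqrt_lt' hε).mpr hlt
    · intro hΩt
      have hcb' : Tendsto c atTop (𝓝[<] b) :=
        tendsto_nhdsWithin_of_tendsto_nhds_of_eventually_within c (hL ▸ hcL)
          (Eventually.of_forall fun n => hcb n)
      have hcomp : Tendsto (fun n => Ω (c n)) atTop (𝓝 0) := hΩt.comp hcb'
      refine squeeze_zero hωnn (fun n => ?_) hcomp
      obtain _ | m := n
      · rw [hω0]; exact hΩnn _
      · rw [hω, hΩ]
        simp only [Nat.add_sub_cancel]
        refine mul_le_mul (Real.sqrt_le_sqrt ?_) (Real.sqrt_le_sqrt ?_)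
          (Real.sqrt_nonneg _) (Real.sqrt_nonneg _)
        · exact le_of_eq (by rw [hκJ m, htail (m+1)])
        · exact setIntegral_mono_set (hφL2 _ (hcmem m))
            (ae_of_all _ fun s => by positivity)
            (HasSubset.Subset.eventuallyLE (Ioo_subset_Ioo (hca m) le_rfl))
  · -- degenerate case : the dyadic points stay away from b
    have hL' : (⨆ n, c n) + (b - ⨆ n, c n)/2 ∈ Ioo a b := ⟨by linarith, by linarith⟩
    have hLL' : (⨆ n, c n) ≤ (⨆ n, c n) + (b - ⨆ n, c n)/2 := by linarith
    have hT0 : ∀ t : ℝ, (⨆ n, c n) ≤ t → (∫ s in Ioo t b, ‖κ s‖ ^ 2) = 0 := by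
      intro t hLt
      refine le_antisymm ?_ (hκnn _ _)
      have hb' : ∀ n : ℕ, (∫ s in Ioo t b, ‖κ s‖ ^ 2)
          ≤ (1/2:ℝ)^n * ∫ s in Ioo a b, ‖κ s‖ ^ 2 := by
        intro n
        rw [← htail n]
        exact hTmono (c n) t (hca n) ((hcleL n).trans hLt)
      have htend : Tendsto (fun n : ℕ => (1/2:ℝ)^n * ∫ s in Ioo a b, ‖κ s‖ ^ 2)
          atTop (𝓝 0) := by
        simpa using (tendsto_pow_atTop_nhds_zero_of_lt_one
          (by norm_num : (0:ℝ) ≤ 1/2) (by norm_num : (1/2:ℝ) < 1)).mul_const _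
      exact ge_of_tendsto' htend hb'
    refine iff_of_true ?_ ?_
    · refine squeeze_zero (g := fun n => Real.sqrt ((1/2)^n * ((∫ s in Ioo a b, ‖κ s‖ ^ 2) *
        ∫ s in Ioo a ((⨆ n, c n) + (b - ⨆ n, c n)/2), ‖φ s‖ ^ 2))) hωnn (fun n => ?_) ?_
      · obtain _ | m := n
        · rw [hω0]; exact Real.sqrt_nonneg _
        · have hφle : (∫ s in Ioo (c m) (c (m+1)), ‖φ s‖ ^ 2)
              ≤ ∫ s in Ioo a ((⨆ n, c n) + (b - ⨆ n, c n)/2), ‖φ s‖ ^ 2 :=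
            setIntegral_mono_set (hφL2 _ hL') (ae_of_all _ fun s => by positivity)
              (HasSubset.Subset.eventuallyLE
                (Ioo_subset_Ioo (hca m) ((hcleL (m+1)).trans hLL')))
          rw [hω]
          simp only [Nat.add_sub_cancel]
          rw [← Real.sqrt_mul (hκnn _ _), hκJ m]
          apply Real.sqrt_le_sqrt
          have hpnn : (0:ℝ) ≤ (1/2)^(m+1) := by positivity
          nlinarith [mul_le_mul_of_nonneg_left hφle (mul_nonneg hpnn hκpos.le)]
      · have h0 : Tendsto (fun n : ℕ => (1/2:ℝ)^n * ((∫ s in Ioo a b, ‖κ s‖ ^ 2) *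
            ∫ s in Ioo a ((⨆ n, c n) + (b - ⨆ n, c n)/2), ‖φ s‖ ^ 2)) atTop (𝓝 0) := by
          simpa using (tendsto_pow_atTop_nhds_zero_of_lt_one
            (by norm_num : (0:ℝ) ≤ 1/2) (by norm_num : (1/2:ℝ) < 1)).mul_const _
        have h1 := (Real.continuous_sqrt.tendsto 0).comp h0
        rw [Real.sqrt_zero] at h1
        exact h1
    · have hmem : Ioo (⨆ n, c n) b ∈ 𝓝[<] b := Ioo_mem_nhdsLT_of_mem ⟨hL, le_rfl⟩
      have hev : Ω =ᶠ[𝓝[<] b] (fun _ => 0) := by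
        filter_upwards [hmem] with t ht
        rw [hΩ, hT0 t ht.1.le, Real.sqrt_zero, zero_mul]
      exact Tendsto.congr' hev.symm tendsto_const_nhds
end

section
/- With the dyadic setup, sup_n ω_n < ∞ if and only if limsup_{t↗b} ‖1_{(a,t)}φ‖·‖1_{(t,b)}κ‖ < ∞. -/
open MeasureTheory Set Filter Topology

theorem omega_bounded_iff_Omega_bounded
    (a b : ℝ) (hab : a < b) (κ φ : ℝ → ℂ)
    (hκmeas : Measurable κ) (hφmeas : Measurable φ)
    (hκL2 : IntegrableOn (fun s => ‖κ s‖ ^ 2) (Ioo a b))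
    (hκpos : 0 < ∫ s in Ioo a b, ‖κ s‖ ^ 2)
    (hφL2 : ∀ c ∈ Ioo a b, IntegrableOn (fun s => ‖φ s‖ ^ 2) (Ioo a c))
    (c : ℕ → ℝ) (hc0 : c 0 = a) (hcmono : StrictMono c) (hcb : ∀ n, c n < b)
    (htail : ∀ n, ∫ s in Ioo (c n) b, ‖κ s‖ ^ 2
      = (1/2 : ℝ) ^ n * ∫ s in Ioo a b, ‖κ s‖ ^ 2)
    (Ω : ℝ → ℝ)
    (hΩ : ∀ t, Ω t = Real.sqrt (∫ s in Ioo t b, ‖κ s‖ ^ 2) *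
      Real.sqrt (∫ s in Ioo a t, ‖φ s‖ ^ 2))
    (ω : ℕ → ℝ)
    (hω : ∀ n, ω n = Real.sqrt (∫ s in Ioo (c (n - 1)) (c n), ‖κ s‖ ^ 2) *
      Real.sqrt (∫ s in Ioo (c (n - 1)) (c n), ‖φ s‖ ^ 2)) :
    (∃ C : ℝ, ∀ n, ω n ≤ C) ↔ (∃ C : ℝ, ∀ᶠ t in 𝓝[<] b, Ω t ≤ C) := by
  set Q := ∫ s in Ioo a b, ‖κ s‖ ^ 2 with hQdef
  have hQnn : (0:ℝ) ≤ Q := hκpos.le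
  have hκnn : ∀ s, (0:ℝ) ≤ ‖κ s‖ ^ 2 := fun s => sq_nonneg _
  have hφnn : ∀ s, (0:ℝ) ≤ ‖φ s‖ ^ 2 := fun s => sq_nonneg _
  have hca : ∀ n, a ≤ c n := fun n => hc0 ▸ hcmono.monotone (Nat.zero_le n)
  have hacn : ∀ n, a < c (n + 1) := fun n => hc0 ▸ hcmono (Nat.succ_pos n)
  have hκint : ∀ u v : ℝ, a ≤ u → v ≤ b → IntegrableOn (fun s => ‖κ s‖ ^ 2) (Ioo u v) :=
    fun u v hu hv => hκL2.mono_set (Ioo_subset_Ioo hu hv)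
  have hTnn : ∀ u v : ℝ, (0:ℝ) ≤ ∫ s in Ioo u v, ‖κ s‖ ^ 2 :=
    fun u v => setIntegral_nonneg measurableSet_Ioo (fun s _ => hκnn s)
  have hPnn : ∀ u v : ℝ, (0:ℝ) ≤ ∫ s in Ioo u v, ‖φ s‖ ^ 2 :=
    fun u v => setIntegral_nonneg measurableSet_Ioo (fun s _ => hφnn s)
  have hκmono : ∀ u v u' v' : ℝ, a ≤ u' → v' ≤ b → Ioo u v ⊆ Ioo u' v' →
      (∫ s in Ioo u v, ‖κ s‖ ^ 2) ≤ ∫ s in Ioo u' v', ‖κ s‖ ^ 2 :=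
    fun u v u' v' h1 h2 hsub => setIntegral_mono_set (hκint u' v' h1 h2)
      (Eventually.of_forall fun s => hκnn s) (HasSubset.Subset.eventuallyLE hsub)
  have hφmono : ∀ u v w : ℝ, a < w → w < b → Ioo u v ⊆ Ioo a w →
      (∫ s in Ioo u v, ‖φ s‖ ^ 2) ≤ ∫ s in Ioo a w, ‖φ s‖ ^ 2 :=
    fun u v w h1 h2 hsub => setIntegral_mono_set (hφL2 w ⟨h1, h2⟩)
      (Eventually.of_forall fun s => hφnn s) (HasSubset.Subset.eventuallyLE hsub)
  have hsplit : ∀ (f : ℝ → ℝ), ∀ u v w : ℝ, u ≤ v → v < w →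
      IntegrableOn f (Ioo u w) →
      ∫ s in Ioo u w, f s = (∫ s in Ioo u v, f s) + ∫ s in Ioo v w, f s := by
    intro f u v w huv hvw hint
    have hdisj : Disjoint (Ioc u v) (Ioo v w) := by
      rw [Set.disjoint_left]
      rintro s ⟨_, h1⟩ ⟨h2, _⟩
      exact absurd h1 (not_le.2 h2)
    have hunion : Ioc u v ∪ Ioo v w = Ioo u w := Ioc_union_Ioo_eq_Ioo huv hvw
    rw [← hunion, setIntegral_union hdisj measurableSet_Ioo
        (hint.mono_set (hunion ▸ subset_union_left))
        (hint.mono_set (hunion ▸ subset_union_right)),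
      integral_Ioc_eq_integral_Ioo]
  have hK : ∀ n, ∫ s in Ioo (c n) (c (n+1)), ‖κ s‖ ^ 2 = (1/2 : ℝ) ^ (n+1) * Q := by
    intro n
    have h := hsplit (fun s => ‖κ s‖ ^ 2) (c n) (c (n+1)) b (hcmono (Nat.lt_succ_self n)).le
      (hcb (n+1)) (hκint (c n) b (hca n) le_rfl)
    rw [htail n, htail (n+1)] at h
    linear_combination -h
  have hω0 : ω 0 = 0 := by
    rw [hω 0]
    simp [Set.Ioo_self]
  have hωs : ∀ n, ω (n+1) = Real.sqrt ((1/2 : ℝ) ^ (n+1) * Q) *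
      Real.sqrt (∫ s in Ioo (c n) (c (n+1)), ‖φ s‖ ^ 2) := by
    intro n
    rw [hω (n+1)]
    simp only [Nat.add_sub_cancel]
    rw [hK n]
  constructor
  · rintro ⟨C, hC⟩
    by_cases hL : ∀ t, t < b → ∃ n, t < c n
    · set C' := max C 0 with hC'def
      have hC'0 : (0:ℝ) ≤ C' := le_max_right _ _
      have hCn : ∀ n, ω n ≤ C' := fun n => (hC n).trans (le_max_left _ _)
      have hKF : ∀ n, ((1/2 : ℝ) ^ (n+1) * Q) *
          (∫ s in Ioo (c n) (c (n+1)), ‖φ s‖ ^ 2) ≤ C' ^ 2 := by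
        intro n
        have h1 := hωs n
        have hKnn : (0:ℝ) ≤ (1/2 : ℝ) ^ (n+1) * Q :=
          mul_nonneg (by positivity) hQnn
        have h2 : ω (n+1) ^ 2 = ((1/2 : ℝ) ^ (n+1) * Q) *
            (∫ s in Ioo (c n) (c (n+1)), ‖φ s‖ ^ 2) := by
          rw [h1, mul_pow, Real.sq_sqrt hKnn, Real.sq_sqrt (hPnn _ _)]
        have hnn : 0 ≤ ω (n+1) := h1 ▸ mul_nonneg (Real.sqrt_nonneg _) (Real.sqrt_nonneg _)
        have h3 : ω (n+1) ^ 2 ≤ C' ^ 2 := by nlinarith [hCn (n+1)]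
        rw [h2] at h3
        exact h3
      have hPc : ∀ n, Q * (∫ s in Ioo a (c n), ‖φ s‖ ^ 2) ≤ C' ^ 2 * (2 ^ (n+1) - 2) := by
        intro n
        induction n with
        | zero => rw [hc0]; simp [Set.Ioo_self]
        | succ n ih =>
          have hsp := hsplit (fun s => ‖φ s‖ ^ 2) a (c n) (c (n+1)) (hca n)
            (hcmono (Nat.lt_succ_self n)) (hφL2 (c (n+1)) ⟨hacn n, hcb (n+1)⟩)
          have hp : ((1/2 : ℝ)) ^ (n+1) * 2 ^ (n+1) = 1 := by
            rw [← mul_pow]; norm_num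
          have hQF : Q * (∫ s in Ioo (c n) (c (n+1)), ‖φ s‖ ^ 2) ≤ C' ^ 2 * 2 ^ (n+1) := by
            have h := mul_le_mul_of_nonneg_left (hKF n)
              (le_of_lt (pow_pos two_pos (n+1)) : (0:ℝ) ≤ 2 ^ (n+1))
            have key : (2:ℝ) ^ (n+1) * (((1/2 : ℝ) ^ (n+1) * Q) *
                (∫ s in Ioo (c n) (c (n+1)), ‖φ s‖ ^ 2)) =
                Q * (∫ s in Ioo (c n) (c (n+1)), ‖φ s‖ ^ 2) := by
              linear_combination (Q * (∫ s in Ioo (c n) (c (n+1)), ‖φ s‖ ^ 2)) * hp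
            rw [key] at h
            linarith
          rw [hsp, mul_add]
          rw [show (2:ℝ) ^ (n+1+1) = 2 * 2 ^ (n+1) by ring]
          linarith
      have hmain : ∀ t, c 1 ≤ t → t < b → Ω t ≤ 2 * C' := by
        intro t h1t htb
        have hex : ∃ m, t < c m := hL t htb
        have hfind : t < c (Nat.find hex) := Nat.find_spec hex
        have hpos : 0 < Nat.find hex := by
          rcases Nat.eq_zero_or_pos (Nat.find hex) with h | h
          · exfalso
            rw [h, hc0] at hfind
            have : a < c 1 := hc0 ▸ hcmono Nat.zero_lt_one
            linarith
          · exact h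
        obtain ⟨n, hn⟩ : ∃ n, Nat.find hex = n + 1 :=
          ⟨Nat.find hex - 1, (Nat.succ_pred_eq_of_pos hpos).symm⟩
        have hcn : c n ≤ t := by
          by_contra h
          exact Nat.find_min hex (by omega) (not_le.mp h)
        have hcn1 : t < c (n+1) := hn ▸ hfind
        have hTt : (∫ s in Ioo t b, ‖κ s‖ ^ 2) ≤ (1/2 : ℝ) ^ n * Q := by
          rw [← htail n]
          exact hκmono t b (c n) b (hca n) le_rfl (Ioo_subset_Ioo_left hcn)
        have hPt : (∫ s in Ioo a t, ‖φ s‖ ^ 2) ≤ ∫ s in Ioo a (c (n+1)), ‖φ s‖ ^ 2 :=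
          hφmono a t (c (n+1)) (hacn n) (hcb (n+1)) (Ioo_subset_Ioo_right hcn1.le)
        have hprod : (∫ s in Ioo t b, ‖κ s‖ ^ 2) * (∫ s in Ioo a t, ‖φ s‖ ^ 2)
            ≤ 4 * C' ^ 2 := by
          have h1 : (∫ s in Ioo t b, ‖κ s‖ ^ 2) * (∫ s in Ioo a t, ‖φ s‖ ^ 2)
              ≤ ((1/2 : ℝ) ^ n * Q) * (∫ s in Ioo a (c (n+1)), ‖φ s‖ ^ 2) :=
            mul_le_mul hTt hPt (hPnn a t) (mul_nonneg (by positivity) hQnn)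
          have h2 := hPc (n+1)
          have h4 : (1/2 : ℝ) ^ n * (Q * (∫ s in Ioo a (c (n+1)), ‖φ s‖ ^ 2))
              ≤ (1/2 : ℝ) ^ n * (C' ^ 2 * (2 ^ (n+1+1) - 2)) :=
            mul_le_mul_of_nonneg_left h2 (by positivity)
          have hp2 : ((1/2 : ℝ)) ^ n * 2 ^ (n+1+1) = 4 := by
            rw [show ((1/2 : ℝ)) ^ n * 2 ^ (n+1+1) = ((1/2 : ℝ) ^ n * 2 ^ n) * 4 by ring,
              ← mul_pow]
            norm_num
          have h5 : (1/2 : ℝ) ^ n * (C' ^ 2 * (2 ^ (n+1+1) - 2)) ≤ 4 * C' ^ 2 := by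
            have e : (1/2 : ℝ) ^ n * (C' ^ 2 * (2 ^ (n+1+1) - 2))
                = 4 * C' ^ 2 - 2 * C' ^ 2 * (1/2 : ℝ) ^ n := by
              linear_combination (C' ^ 2) * hp2
            rw [e]
            nlinarith [sq_nonneg C', pow_nonneg (by norm_num : (0:ℝ) ≤ 1/2) n]
          nlinarith [h1, h4, h5]
        rw [hΩ t]
        calc Real.sqrt (∫ s in Ioo t b, ‖κ s‖ ^ 2) * Real.sqrt (∫ s in Ioo a t, ‖φ s‖ ^ 2)
            = Real.sqrt ((∫ s in Ioo t b, ‖κ s‖ ^ 2) * (∫ s in Ioo a t, ‖φ s‖ ^ 2)) :=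
              (Real.sqrt_mul (hTnn t b) _).symm
          _ ≤ Real.sqrt (4 * C' ^ 2) := Real.sqrt_le_sqrt hprod
          _ = 2 * C' := by
              rw [show (4:ℝ) * C' ^ 2 = (2 * C') ^ 2 by ring,
                Real.sqrt_sq (by linarith : (0:ℝ) ≤ 2 * C')]
      refine ⟨2 * C', ?_⟩
      filter_upwards [Ioo_mem_nhdsLT_of_mem (⟨hcb 1, le_rfl⟩ : b ∈ Ioc (c 1) b)] with t ht
      exact hmain t ht.1.le ht.2
    · push_neg at hL
      obtain ⟨t₀, ht₀b, ht₀⟩ := hL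
      refine ⟨0, ?_⟩
      filter_upwards [Ioo_mem_nhdsLT_of_mem (⟨ht₀b, le_rfl⟩ : b ∈ Ioc t₀ b)] with t ht
      have htend : Tendsto (fun n : ℕ => ((1/2 : ℝ)) ^ n * Q) atTop (𝓝 0) := by
        have h := (tendsto_pow_atTop_nhds_zero_of_lt_one
          (by norm_num : (0:ℝ) ≤ 1/2) (by norm_num : (1/2 : ℝ) < 1)).mul_const Q
        simpa using h
      have hle : ∀ n : ℕ, (∫ s in Ioo t b, ‖κ s‖ ^ 2) ≤ (1/2 : ℝ) ^ n * Q := fun n => by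
        rw [← htail n]
        exact hκmono t b (c n) b (hca n) le_rfl
          (Ioo_subset_Ioo_left ((ht₀ n).trans ht.1.le))
      have hT0 : (∫ s in Ioo t b, ‖κ s‖ ^ 2) = 0 :=
        le_antisymm (ge_of_tendsto' htend hle) (hTnn t b)
      rw [hΩ t, hT0, Real.sqrt_zero, zero_mul]
  · rintro ⟨C, hC⟩
    obtain ⟨t₀, ht₀b, ht₀⟩ : ∃ t₀ ∈ Iio b, ∀ t ∈ Ioo t₀ b, Ω t ≤ C := by
      obtain ⟨l, hl, hsub⟩ := mem_nhdsLT_iff_exists_Ioo_subset.mp hC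
      exact ⟨l, hl, fun t ht => hsub ht⟩
    have hhalf : ∀ n, (1/2 : ℝ) ^ (n+1) * Q ≤ Q :=
      fun n => mul_le_of_le_one_left hQnn (pow_le_one₀ (by norm_num) (by norm_num))
    by_cases hL : ∀ t, t < b → ∃ n, t < c n
    · obtain ⟨N, hN⟩ := hL t₀ ht₀b
      set B := Real.sqrt Q * Real.sqrt (∫ s in Ioo a (c (N+1)), ‖φ s‖ ^ 2) with hBdef
      have hBnn : (0:ℝ) ≤ B := mul_nonneg (Real.sqrt_nonneg _) (Real.sqrt_nonneg _)
      refine ⟨max C B, fun n => ?_⟩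
      match n with
      | 0 =>
        rw [hω0]
        exact le_trans hBnn (le_max_right _ _)
      | Nat.succ n =>
        rw [hωs n]
        by_cases hn : N + 1 ≤ n + 1
        · have hmem : c (n+1) ∈ Ioo t₀ b :=
            ⟨lt_of_lt_of_le hN (hcmono.monotone (by omega : N ≤ n + 1)), hcb (n+1)⟩
          have h2 := ht₀ _ hmem
          rw [hΩ] at h2
          have hF : (∫ s in Ioo (c n) (c (n+1)), ‖φ s‖ ^ 2)
              ≤ ∫ s in Ioo a (c (n+1)), ‖φ s‖ ^ 2 :=
            hφmono (c n) (c (n+1)) (c (n+1)) (hacn n) (hcb (n+1))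
              (Ioo_subset_Ioo_left (hca n))
          have e : (1/2 : ℝ) ^ (n+1) * Q = ∫ s in Ioo (c (n+1)) b, ‖κ s‖ ^ 2 :=
            (htail (n+1)).symm
          rw [e]
          calc Real.sqrt (∫ s in Ioo (c (n+1)) b, ‖κ s‖ ^ 2) *
                Real.sqrt (∫ s in Ioo (c n) (c (n+1)), ‖φ s‖ ^ 2)
              ≤ Real.sqrt (∫ s in Ioo (c (n+1)) b, ‖κ s‖ ^ 2) *
                Real.sqrt (∫ s in Ioo a (c (n+1)), ‖φ s‖ ^ 2) :=
                mul_le_mul_of_nonneg_left (Real.sqrt_le_sqrt hF) (Real.sqrt_nonneg _)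
            _ ≤ C := h2
            _ ≤ max C B := le_max_left _ _
        · have hnN : n + 1 ≤ N + 1 := by omega
          have hF : (∫ s in Ioo (c n) (c (n+1)), ‖φ s‖ ^ 2)
              ≤ ∫ s in Ioo a (c (N+1)), ‖φ s‖ ^ 2 :=
            hφmono (c n) (c (n+1)) (c (N+1)) (hacn N) (hcb (N+1))
              (Ioo_subset_Ioo (hca n) (hcmono.monotone hnN))
          calc Real.sqrt ((1/2 : ℝ) ^ (n+1) * Q) *
                Real.sqrt (∫ s in Ioo (c n) (c (n+1)), ‖φ s‖ ^ 2)
              ≤ Real.sqrt Q * Real.sqrt (∫ s in Ioo a (c (N+1)), ‖φ s‖ ^ 2) :=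
                mul_le_mul (Real.sqrt_le_sqrt (hhalf n)) (Real.sqrt_le_sqrt hF)
                  (Real.sqrt_nonneg _) (Real.sqrt_nonneg _)
            _ ≤ max C B := le_max_right _ _
    · push_neg at hL
      obtain ⟨t₁, ht₁b, ht₁⟩ := hL
      set u := max t₁ ((a + b) / 2) with hudef
      have hau : a < u := lt_of_lt_of_le (by linarith) (le_max_right _ _)
      have hub : u < b := max_lt ht₁b (by linarith)
      have hcu : ∀ n, c n ≤ u := fun n => (ht₁ n).trans (le_max_left _ _)
      set B := Real.sqrt Q * Real.sqrt (∫ s in Ioo a u, ‖φ s‖ ^ 2) with hBdef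
      have hBnn : (0:ℝ) ≤ B := mul_nonneg (Real.sqrt_nonneg _) (Real.sqrt_nonneg _)
      refine ⟨B, fun n => ?_⟩
      match n with
      | 0 => rw [hω0]; exact hBnn
      | Nat.succ n =>
        rw [hωs n]
        have hF : (∫ s in Ioo (c n) (c (n+1)), ‖φ s‖ ^ 2) ≤ ∫ s in Ioo a u, ‖φ s‖ ^ 2 :=
          hφmono (c n) (c (n+1)) u hau hub (Ioo_subset_Ioo (hca n) (hcu (n+1)))
        exact mul_le_mul (Real.sqrt_le_sqrt (hhalf n)) (Real.sqrt_le_sqrt hF)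
          (Real.sqrt_nonneg _) (Real.sqrt_nonneg _)
end

section
/- Let h₁ : (0,∞) → [0,1] be measurable with ∫_0^∞ h₁ < ∞, p(t) := sup_{x≥t}(x ∫_x^∞ h₁(s) ds)^{1/2}, m₃(t) = ∫_0^t h₃ with h₃² ≤ h₁ a.e., and let λ ∈ ℝ, t₀ > 0 with 2|λ| p(t₀) < 1. Then for all t ≥ t₀: ∫_t^∞ h₁(s) e^{2λ(m₃(s)−m₃(t))} ds ≤ (p(t)²/t) · e/(1 − 2|λ|p(t₀)). -/
open MeasureTheory Set Real
open scoped ENNReal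

lemma kac_bdd_int (f : ℝ → ℝ) (hf : Measurable f) (s : Set ℝ)
    (hvol : volume s < ⊤) (C : ℝ)
    (hC : ∀ᵐ x ∂(volume.restrict s), |f x| ≤ C) : IntegrableOn f s := by
  refine Integrable.mono' (g := fun _ => C) ?_ hf.aestronglyMeasurable.restrict ?_
  · exact integrableOn_const hvol.ne
  · simpa [Real.norm_eq_abs] using hC

lemma kac_swap (t : ℝ) (f g : ℝ → ℝ≥0∞) (hf : Measurable f) (hg : Measurable g) :
    ∫⁻ y in Ioi t, f y * ∫⁻ x in Ioo t y, g x
      = ∫⁻ x in Ioi t, g x * ∫⁻ y in Ioi x, f y := by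
  have key : ∀ y : ℝ, ∫⁻ x in Ioo t y, g x
      = ∫⁻ x in Ioi t, (Iio y).indicator g x := by
    intro y
    rw [lintegral_indicator measurableSet_Iio, Measure.restrict_restrict measurableSet_Iio]
    congr 1
    rw [Set.Iio_inter_Ioi]
  calc ∫⁻ y in Ioi t, f y * ∫⁻ x in Ioo t y, g x
      = ∫⁻ y in Ioi t, ∫⁻ x in Ioi t, f y * (Iio y).indicator g x := by
        refine lintegral_congr fun y => ?_
        rw [key y, lintegral_const_mul _ (hg.indicator measurableSet_Iio)]
    _ = ∫⁻ x in Ioi t, ∫⁻ y in Ioi t, f y * (Iio y).indicator g x := by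
        apply lintegral_lintegral_swap
        have : (fun (q : ℝ × ℝ) => f q.1 * (Iio q.1).indicator g q.2)
            = fun q => f q.1 * g q.2 * {q : ℝ × ℝ | q.2 < q.1}.indicator 1 q := by
          funext q
          by_cases h : q.2 < q.1
          · simp [Set.indicator_of_mem, h, Set.indicator_of_mem (show q.2 ∈ Iio q.1 from h)]
          · simp [Set.indicator_of_notMem, h, Set.indicator_of_notMem (show q.2 ∉ Iio q.1 from h)]
        rw [show Function.uncurry (fun y x => f y * (Iio y).indicator g x)
            = (fun (q : ℝ × ℝ) => f q.1 * (Iio q.1).indicator g q.2) from rfl, this]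
        refine (((hf.comp measurable_fst).mul (hg.comp measurable_snd)).mul ?_).aemeasurable
        exact (measurable_const.indicator (measurableSet_lt measurable_snd measurable_fst))
    _ = ∫⁻ x in Ioi t, g x * ∫⁻ y in Ioi x, f y := by
        refine setLIntegral_congr_fun measurableSet_Ioi (fun x hx => ?_)
        have : ∀ y : ℝ, f y * (Iio y).indicator g x = g x * (Ioi x).indicator f y := by
          intro y
          by_cases h : x < y
          · rw [Set.indicator_of_mem (show x ∈ Iio y from h),
              Set.indicator_of_mem (show y ∈ Ioi x from h), mul_comm]
          · rw [Set.indicator_of_notMem (show x ∉ Iio y from h),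
              Set.indicator_of_notMem (show y ∉ Ioi x from h), mul_zero, mul_zero]
        simp_rw [this]
        rw [lintegral_const_mul _ (hf.indicator measurableSet_Ioi),
          lintegral_indicator measurableSet_Ioi, Measure.restrict_restrict measurableSet_Ioi]
        congr 2
        rw [Set.Ioi_inter_Ioi, max_eq_left (le_of_lt hx)]

lemma kac_alg (A T P2 tt : ℝ) (h1A : 1 - A ≠ 0) (hT : T ≠ 0) (ht : tt ≠ 0) :
    A / T * (P2 * (T / tt / (1 - A))) = P2 / tt * (A / (1 - A)) := by
  field_simp

lemma kac_alg2 (A X : ℝ) (h : 1 - A ≠ 0) : X * (1 / (1 - A)) = X + X * (A / (1 - A)) := by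
  field_simp
  ring


set_option maxHeartbeats 1000000 in
theorem first_integral_bound_kac
    (h₁ h₃ : ℝ → ℝ) (hmeas₁ : Measurable h₁) (hmeas₃ : Measurable h₃)
    (hbd : ∀ᵐ s ∂(volume.restrict (Ioi (0:ℝ))),
      0 ≤ h₁ s ∧ h₁ s ≤ 1 ∧ h₃ s ^ 2 ≤ h₁ s)
    (hint₁ : IntegrableOn h₁ (Ioi (0:ℝ)))
    (m₃ : ℝ → ℝ) (hm₃ : ∀ t, m₃ t = ∫ s in Ioo 0 t, h₃ s)
    (p : ℝ → ℝ)
    (hp : ∀ t, p t = ⨆ x : {x : ℝ // t ≤ x}, Real.sqrt (x.1 * ∫ s in Ioi x.1, h₁ s))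
    (hpfin : ∀ t : ℝ, 0 < t →
      BddAbove (Set.range fun x : {x : ℝ // t ≤ x} =>
        Real.sqrt (x.1 * ∫ s in Ioi x.1, h₁ s)))
    (lam t₀ : ℝ) (ht₀ : 0 < t₀) (hsmall : 2 * |lam| * p t₀ < 1) :
    ∀ t : ℝ, t₀ ≤ t →
      ∫⁻ s in Ioi t, ENNReal.ofReal (h₁ s * Real.exp (2 * lam * (m₃ s - m₃ t))) ≤
        ENNReal.ofReal (p t ^ 2 / t * (Real.exp 1 / (1 - 2 * |lam| * p t₀))) := by
  intro t ht
  have ht0 : 0 < t := lt_of_lt_of_le ht₀ ht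
  -- nonnegativity a.e. on subsets of Ioi 0
  have hae : ∀ (s : Set ℝ), s ⊆ Ioi (0:ℝ) → ∀ᵐ x ∂(volume.restrict s),
      0 ≤ h₁ x ∧ h₁ x ≤ 1 ∧ h₃ x ^ 2 ≤ h₁ x :=
    fun s hs => ae_restrict_of_ae_restrict_of_subset hs hbd
  have hHnn : ∀ x : ℝ, 0 < x → 0 ≤ ∫ s in Ioi x, h₁ s := by
    intro x hx
    refine setIntegral_nonneg_of_ae_restrict ?_
    filter_upwards [hae (Ioi x) (Ioi_subset_Ioi (le_of_lt hx))] with u hu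
    exact hu.1
  have hpge : ∀ y : ℝ, 0 < y → ∀ x : ℝ, y ≤ x →
      Real.sqrt (x * ∫ s in Ioi x, h₁ s) ≤ p y := by
    intro y hy x hxy
    rw [hp y]
    exact le_ciSup (hpfin y hy) ⟨x, hxy⟩
  have hPnn : ∀ y : ℝ, 0 < y → 0 ≤ p y := fun y hy =>
    le_trans (Real.sqrt_nonneg _) (hpge y hy y le_rfl)
  have tailP : ∀ x, t ≤ x → x * (∫ s in Ioi x, h₁ s) ≤ p t ^ 2 := by
    intro x hx
    have hx0 : 0 < x := lt_of_lt_of_le ht0 hx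
    have h1 : 0 ≤ x * ∫ s in Ioi x, h₁ s := mul_nonneg (le_of_lt hx0) (hHnn x hx0)
    have := hpge t ht0 x hx
    calc x * ∫ s in Ioi x, h₁ s = Real.sqrt (x * ∫ s in Ioi x, h₁ s) ^ 2 := by
          rw [Real.sq_sqrt h1]
      _ ≤ p t ^ 2 := by
          exact pow_le_pow_left₀ (Real.sqrt_nonneg _) this 2
  have hPmono : p t ≤ p t₀ := by
    rw [hp t]
    refine ciSup_le fun x => ?_
    exact hpge t₀ ht₀ x.1 (le_trans ht x.2)
  have hHle : ∀ x, t ≤ x → (∫ s in Ioi x, h₁ s) ≤ p t ^ 2 / x := by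
    intro x hx
    have hx0 : 0 < x := lt_of_lt_of_le ht0 hx
    rw [le_div_iff₀ hx0]
    linarith [tailP x hx]
  have h1intIoi : ∀ x : ℝ, 0 < x → IntegrableOn h₁ (Ioi x) :=
    fun x hx => hint₁.mono_set (Ioi_subset_Ioi (le_of_lt hx))
  have h1nnIoi : ∀ x : ℝ, 0 < x → 0 ≤ᵐ[volume.restrict (Ioi x)] h₁ := by
    intro x hx
    filter_upwards [hae (Ioi x) (Ioi_subset_Ioi (le_of_lt hx))] with u hu
    exact hu.1
  have h3int : ∀ x : ℝ, IntegrableOn h₃ (Ioo 0 x) := by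
    intro x
    refine kac_bdd_int h₃ hmeas₃ _ measure_Ioo_lt_top 1 ?_
    filter_upwards [hae (Ioo 0 x) Ioo_subset_Ioi_self] with u hu
    nlinarith [sq_abs (h₃ u), abs_nonneg (h₃ u), hu.2.1, hu.2.2]
  have h3intsub : ∀ x y : ℝ, 0 < x → IntegrableOn h₃ (Ioo x y) :=
    fun x y hx => (h3int y).mono_set (fun u hu => ⟨lt_trans hx hu.1, hu.2⟩)
  have hΔ : ∀ s, t ≤ s → m₃ s - m₃ t = ∫ u in Ioo t s, h₃ u := by
    intro s hs
    have hsplit : Ioo (0:ℝ) t ∪ Ico t s = Ioo 0 s := Set.Ioo_union_Ico_eq_Ioo ht0 hs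
    have hico : (∫ u in Ico t s, h₃ u) = ∫ u in Ioo t s, h₃ u :=
      setIntegral_congr_set Ioo_ae_eq_Ico.symm
    rw [hm₃ s, hm₃ t, ← hsplit,
      setIntegral_union (Set.disjoint_left.2 fun u hu hu2 => absurd hu.2 (not_lt.2 hu2.1)) measurableSet_Ico
        (h3int t) (((h3int s).mono_set (fun u hu => ⟨lt_of_lt_of_le ht0 hu.1, hu.2⟩))),
      hico]
    ring
  have hinvint : ∀ s, t < s → IntegrableOn (fun x : ℝ => x⁻¹) (Ioo t s) := by
    intro s hts
    refine kac_bdd_int _ measurable_inv _ measure_Ioo_lt_top t⁻¹ ?_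
    refine (ae_restrict_iff' measurableSet_Ioo).2 (ae_of_all _ fun x hx => ?_)
    have hx0 : 0 < x := lt_trans ht0 hx.1
    rw [abs_of_nonneg (le_of_lt (inv_pos.2 hx0))]
    exact inv_anti₀ ht0 (le_of_lt hx.1)
  have hinvlog : ∀ s, t < s → (∫ x in Ioo t s, x⁻¹) = Real.log (s / t) := by
    intro s hts
    rw [setIntegral_congr_set Ioo_ae_eq_Ioc,
      ← intervalIntegral.integral_of_le (le_of_lt hts)]
    refine integral_inv ?_
    rw [Set.uIcc_of_le (le_of_lt hts)]
    exact fun h => absurd h.1 (not_le.2 ht0)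
  have huh1int : ∀ s, t < s → IntegrableOn (fun u : ℝ => u * h₁ u) (Ioo t s) := by
    intro s hts
    refine kac_bdd_int _ (measurable_id.mul hmeas₁) _ measure_Ioo_lt_top s ?_
    filter_upwards [hae _ (fun u (hu : u ∈ Ioo t s) => lt_trans ht0 hu.1),
      (ae_restrict_iff' measurableSet_Ioo).2 (ae_of_all _ fun u (hu : u ∈ Ioo t s) => hu)]
      with u hu hmem
    show |u * h₁ u| ≤ s
    rw [abs_mul, abs_of_nonneg (le_of_lt (lt_trans ht0 hmem.1)), abs_of_nonneg hu.1]
    nlinarith [hu.2.1, hmem.1, hmem.2]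
  -- bound on ∫ u * h₁ u over Ioo t s
  have hQ : ∀ s, t < s → ∫ u in Ioo t s, u * h₁ u ≤ p t ^ 2 * (1 + Real.log (s/t)) := by
    intro s hts
    have hs0 : 0 < s := lt_trans ht0 hts
    have hL0 : 0 ≤ Real.log (s/t) :=
      Real.log_nonneg ((one_le_div ht0).2 (le_of_lt hts))
    have haes : ∀ᵐ u ∂(volume.restrict (Ioo t s)),
        0 ≤ h₁ u ∧ h₁ u ≤ 1 ∧ h₃ u ^ 2 ≤ h₁ u :=
      hae _ (fun u hu => lt_trans ht0 hu.1)
    have haemem : ∀ᵐ u ∂(volume.restrict (Ioo t s)), u ∈ Ioo t s :=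
      (ae_restrict_iff' measurableSet_Ioo).2 (ae_of_all _ fun u hu => hu)
    have hint_th : IntegrableOn (fun u => t * h₁ u) (Ioo t s) := by
      refine kac_bdd_int _ (measurable_const.mul hmeas₁) _ measure_Ioo_lt_top t ?_
      filter_upwards [haes] with u hu
      show |t * h₁ u| ≤ t
      rw [abs_mul, abs_of_nonneg (le_of_lt ht0), abs_of_nonneg hu.1]
      nlinarith [hu.2.1]
    have hint_J : IntegrableOn (fun u => (u - t) * h₁ u) (Ioo t s) := by
      refine kac_bdd_int _ ((measurable_id.sub measurable_const).mul hmeas₁) _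
        measure_Ioo_lt_top (s - t) ?_
      filter_upwards [haes, haemem] with u hu hmem
      show |(u - t) * h₁ u| ≤ s - t
      rw [abs_mul, abs_of_nonneg (by linarith [hmem.1] : (0:ℝ) ≤ u - t),
        abs_of_nonneg hu.1]
      nlinarith [hu.2.1, hmem.2, hmem.1]
    have hJnn : 0 ≤ᵐ[volume.restrict (Ioo t s)] fun u => (u - t) * h₁ u := by
      filter_upwards [haes, haemem] with u hu hmem
      exact mul_nonneg (by linarith [hmem.1]) hu.1
    have hJ : (∫ u in Ioo t s, (u - t) * h₁ u) ≤ p t ^ 2 * Real.log (s/t) := by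
      set f : ℝ → ℝ≥0∞ := (Ioo t s).indicator (fun y => ENNReal.ofReal (h₁ y)) with hf_def
      have hfm : Measurable f :=
        (ENNReal.measurable_ofReal.comp hmeas₁).indicator measurableSet_Ioo
      have hswap := kac_swap t f 1 hfm measurable_one
      simp only [Pi.one_apply, one_mul] at hswap
      have hL : (∫⁻ y in Ioi t, f y * ∫⁻ x in Ioo t y, (1:ℝ≥0∞))
          = ∫⁻ u in Ioo t s, ENNReal.ofReal ((u - t) * h₁ u) := by
        have e1 : ∀ y : ℝ, f y * ∫⁻ x in Ioo t y, (1:ℝ≥0∞)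
            = (Ioo t s).indicator (fun y => ENNReal.ofReal ((y - t) * h₁ y)) y := by
          intro y
          rw [setLIntegral_one, Real.volume_Ioo]
          by_cases h : y ∈ Ioo t s
          · rw [hf_def, Set.indicator_of_mem h, Set.indicator_of_mem h,
              ENNReal.ofReal_mul (by linarith [h.1] : (0:ℝ) ≤ y - t), mul_comm]
          · rw [hf_def, Set.indicator_of_notMem h, Set.indicator_of_notMem h, zero_mul]
        calc (∫⁻ y in Ioi t, f y * ∫⁻ x in Ioo t y, (1:ℝ≥0∞))
            = ∫⁻ y in Ioi t,
                (Ioo t s).indicator (fun y => ENNReal.ofReal ((y - t) * h₁ y)) y :=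
              lintegral_congr fun y => e1 y
          _ = ∫⁻ u in Ioo t s, ENNReal.ofReal ((u - t) * h₁ u) := by
              rw [lintegral_indicator measurableSet_Ioo,
                Measure.restrict_restrict measurableSet_Ioo,
                Set.inter_eq_left.2 Ioo_subset_Ioi_self]
      have hintinv : IntegrableOn (fun x : ℝ => p t ^ 2 * x⁻¹) (Ioo t s) :=
        (hinvint s hts).const_mul _
      have hinvnn : 0 ≤ᵐ[volume.restrict (Ioo t s)] fun x : ℝ => p t ^ 2 * x⁻¹ := by
        refine (ae_restrict_iff' measurableSet_Ioo).2 (ae_of_all _ fun x hx => ?_)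
        have hx0 : 0 < x := lt_trans ht0 hx.1
        positivity
      have hinv := hinvlog s hts
      have hR : (∫⁻ x in Ioi t, ∫⁻ y in Ioi x, f y)
          ≤ ENNReal.ofReal (p t ^ 2 * Real.log (s / t)) := by
        have step : ∀ x ∈ Ioi t, (∫⁻ y in Ioi x, f y)
            ≤ (Ioo t s).indicator (fun x => ENNReal.ofReal (p t ^ 2 * x⁻¹)) x := by
          intro x hx
          by_cases hxs : x < s
          · rw [Set.indicator_of_mem (Set.mem_Ioo.2 ⟨hx, hxs⟩)]
            have hx0 : 0 < x := lt_trans ht0 hx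
            calc (∫⁻ y in Ioi x, f y) ≤ ∫⁻ y in Ioi x, ENNReal.ofReal (h₁ y) :=
                  lintegral_mono fun y => Set.indicator_le_self _ _ y
              _ = ENNReal.ofReal (∫ y in Ioi x, h₁ y) :=
                  (ofReal_integral_eq_lintegral_ofReal (h1intIoi x hx0) (h1nnIoi x hx0)).symm
              _ ≤ ENNReal.ofReal (p t ^ 2 * x⁻¹) := by
                  refine ENNReal.ofReal_le_ofReal ?_
                  rw [← div_eq_mul_inv]
                  exact hHle x (le_of_lt hx)
          · have hxnot : x ∉ Ioo t s := fun hmem => absurd hmem.2 hxs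
            rw [Set.indicator_of_notMem hxnot]
            have hz : (∫⁻ y in Ioi x, f y) = ∫⁻ y in Ioi x, 0 := by
              refine setLIntegral_congr_fun measurableSet_Ioi (fun y hy => ?_)
              rw [hf_def, Set.indicator_of_notMem]
              exact fun hmem => absurd hmem.2 (by simp only [Set.mem_Ioi] at hy; push_neg at hxs; exact not_lt.2 (le_trans hxs (le_of_lt hy)))
            rw [hz, lintegral_zero]
        calc (∫⁻ x in Ioi t, ∫⁻ y in Ioi x, f y)
            ≤ ∫⁻ x in Ioi t,
                (Ioo t s).indicator (fun x => ENNReal.ofReal (p t ^ 2 * x⁻¹)) x :=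
              setLIntegral_mono' measurableSet_Ioi step
          _ = ∫⁻ x in Ioo t s, ENNReal.ofReal (p t ^ 2 * x⁻¹) := by
              rw [lintegral_indicator measurableSet_Ioo,
                Measure.restrict_restrict measurableSet_Ioo,
                Set.inter_eq_left.2 Ioo_subset_Ioi_self]
          _ = ENNReal.ofReal (∫ x in Ioo t s, p t ^ 2 * x⁻¹) :=
              (ofReal_integral_eq_lintegral_ofReal hintinv hinvnn).symm
          _ = ENNReal.ofReal (p t ^ 2 * Real.log (s / t)) := by
              rw [integral_const_mul, hinv]
      have hJofReal := ofReal_integral_eq_lintegral_ofReal hint_J hJnn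
      rw [← hL, hswap] at hJofReal
      have hfin : ENNReal.ofReal (∫ u in Ioo t s, (u - t) * h₁ u)
          ≤ ENNReal.ofReal (p t ^ 2 * Real.log (s / t)) := hJofReal ▸ hR
      exact (ENNReal.ofReal_le_ofReal_iff (mul_nonneg (sq_nonneg _) hL0)).1 hfin
    have hsum : (∫ u in Ioo t s, u * h₁ u)
        = (∫ u in Ioo t s, t * h₁ u) + ∫ u in Ioo t s, (u - t) * h₁ u := by
      rw [← integral_add hint_th hint_J]
      refine setIntegral_congr_fun measurableSet_Ioo fun u hu => ?_
      ring
    have hth : (∫ u in Ioo t s, t * h₁ u) ≤ p t ^ 2 := by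
      rw [integral_const_mul]
      have hmono : (∫ u in Ioo t s, h₁ u) ≤ ∫ u in Ioi t, h₁ u := by
        refine setIntegral_mono_set (h1intIoi t ht0) (h1nnIoi t ht0) ?_
        exact HasSubset.Subset.eventuallyLE Ioo_subset_Ioi_self
      calc t * ∫ u in Ioo t s, h₁ u ≤ t * (p t ^ 2 / t) := by
            refine mul_le_mul_of_nonneg_left (le_trans hmono (hHle t le_rfl)) (le_of_lt ht0)
        _ = p t ^ 2 := by field_simp
      
    calc (∫ u in Ioo t s, u * h₁ u)
        ≤ p t ^ 2 + p t ^ 2 * Real.log (s/t) := by rw [hsum]; exact add_le_add hth hJ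
      _ = p t ^ 2 * (1 + Real.log (s/t)) := by ring
  have hK : ∀ s, t < s → |m₃ s - m₃ t| ≤ p t * (1 + Real.log (s / t)) := by
    intro s hts
    have hL0 : 0 < Real.log (s / t) := Real.log_pos ((one_lt_div ht0).2 hts)
    set L := Real.log (s / t) with hLdef
    have habs_int : IntegrableOn (fun u => |h₃ u|) (Ioo t s) := (h3intsub t s ht0).abs
    have step1 : ∀ c : ℝ, 0 < c → (∫ u in Ioo t s, |h₃ u|)
        ≤ c / 2 * (p t ^ 2 * (1 + L)) + c⁻¹ / 2 * L := by
      intro c hc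
      have pointwise : ∀ᵐ u ∂(volume.restrict (Ioo t s)),
          |h₃ u| ≤ c / 2 * (u * h₁ u) + c⁻¹ / 2 * u⁻¹ := by
        filter_upwards [hae _ (fun u (hu : u ∈ Ioo t s) => lt_trans ht0 hu.1),
          (ae_restrict_iff' measurableSet_Ioo).2 (ae_of_all _ fun u (hu : u ∈ Ioo t s) => hu)]
          with u hu hmem
        have hu0 : 0 < u := lt_trans ht0 hmem.1
        have hcu : 0 < c * u := mul_pos hc hu0
        set A := Real.sqrt (c * u) with hAdef
        have hA0 : 0 < A := Real.sqrt_pos.2 hcu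
        have hA2 : A ^ 2 = c * u := Real.sq_sqrt (le_of_lt hcu)
        have hone : A * A⁻¹ = 1 := mul_inv_cancel₀ (ne_of_gt hA0)
        have hAinv : A⁻¹ ^ 2 = c⁻¹ * u⁻¹ := by
          rw [inv_pow, hA2, mul_inv]
        have hsq := sq_nonneg (A * |h₃ u| - A⁻¹)
        have expand : (A * |h₃ u| - A⁻¹) ^ 2
            = A ^ 2 * |h₃ u| ^ 2 - 2 * (A * A⁻¹) * |h₃ u| + A⁻¹ ^ 2 := by ring
        rw [expand, hA2, hone, hAinv, sq_abs] at hsq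
        have e2 : (c * u) * (h₃ u ^ 2) ≤ (c * u) * (h₁ u) :=
          mul_le_mul_of_nonneg_left hu.2.2 (le_of_lt hcu)
        linarith [hsq, e2]
      have hint_sum : IntegrableOn
          (fun u : ℝ => c / 2 * (u * h₁ u) + c⁻¹ / 2 * u⁻¹) (Ioo t s) :=
        ((huh1int s hts).const_mul _).add ((hinvint s hts).const_mul _)
      calc (∫ u in Ioo t s, |h₃ u|)
          ≤ ∫ u in Ioo t s, (c / 2 * (u * h₁ u) + c⁻¹ / 2 * u⁻¹) :=
            integral_mono_ae habs_int hint_sum pointwise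
        _ = c / 2 * (∫ u in Ioo t s, u * h₁ u) + c⁻¹ / 2 * ∫ u in Ioo t s, u⁻¹ := by
            rw [integral_add ((huh1int s hts).const_mul _) ((hinvint s hts).const_mul _),
              integral_const_mul, integral_const_mul]
        _ ≤ c / 2 * (p t ^ 2 * (1 + L)) + c⁻¹ / 2 * L := by
            rw [hinvlog s hts]
            exact add_le_add
              (mul_le_mul_of_nonneg_left (hQ s hts) (by positivity)) le_rfl
    have hDabs : |m₃ s - m₃ t| ≤ ∫ u in Ioo t s, |h₃ u| := by
      rw [hΔ s (le_of_lt hts)]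
      simpa [Real.norm_eq_abs] using
        norm_integral_le_integral_norm (μ := volume.restrict (Ioo t s)) h₃
    rcases eq_or_lt_of_le (hPnn t ht0) with hP0 | hPpos
    · by_contra hcon
      push_neg at hcon
      have hpos : 0 < |m₃ s - m₃ t| := by
        refine lt_of_le_of_lt ?_ hcon
        rw [← hP0]
        simp
      set D := |m₃ s - m₃ t| with hDdef
      have hc : 0 < L / D := div_pos hL0 hpos
      have := le_trans hDabs (step1 (L / D) hc)
      rw [← hP0] at this
      have heq : (L / D)⁻¹ / 2 * L = D / 2 := by
        field_simp
      rw [heq] at this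
      norm_num at this
      linarith
    · set SL := Real.sqrt L with hSLdef
      set S1 := Real.sqrt (1 + L) with hS1def
      have hSL0 : 0 < SL := Real.sqrt_pos.2 hL0
      have hS10 : 0 < S1 := Real.sqrt_pos.2 (by linarith)
      have hSLsq : SL ^ 2 = L := Real.sq_sqrt (le_of_lt hL0)
      have hS1sq : S1 ^ 2 = 1 + L := Real.sq_sqrt (by linarith)
      set c := SL / (p t * S1) with hcdef
      have hc : 0 < c := div_pos hSL0 (mul_pos hPpos hS10)
      have hstep := le_trans hDabs (step1 c hc)
      have h1 : c * (p t ^ 2 * (1 + L)) = p t * (SL * S1) := by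
        rw [hcdef, ← hS1sq]
        field_simp
      have h2 : c⁻¹ * L = p t * (SL * S1) := by
        rw [hcdef, ← hSLsq, inv_div]
        field_simp
      have h3 : SL * S1 ≤ 1 + L := by
        rw [hSLdef, hS1def, ← Real.sqrt_mul (le_of_lt hL0)]
        calc Real.sqrt (L * (1 + L)) ≤ Real.sqrt ((1 + L) ^ 2) :=
              Real.sqrt_le_sqrt (by nlinarith)
          _ = 1 + L := Real.sqrt_sq (by linarith)
      have key : c / 2 * (p t ^ 2 * (1 + L)) + c⁻¹ / 2 * L ≤ p t * (1 + L) := by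
        calc c / 2 * (p t ^ 2 * (1 + L)) + c⁻¹ / 2 * L
            = (c * (p t ^ 2 * (1 + L)) + c⁻¹ * L) / 2 := by ring
          _ = p t * (SL * S1) := by rw [h1, h2]; ring
          _ ≤ p t * (1 + L) := mul_le_mul_of_nonneg_left h3 (le_of_lt hPpos)
      linarith
  -- main chain
  have hPnn' : 0 ≤ p t := hPnn t ht0
  have hlam0 : (0:ℝ) ≤ 2 * |lam| := by positivity
  set a := 2 * |lam| * p t with hadef
  have ha0 : 0 ≤ a := mul_nonneg hlam0 hPnn'
  have hab : a ≤ 2 * |lam| * p t₀ := mul_le_mul_of_nonneg_left hPmono hlam0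
  have ha1 : a < 1 := lt_of_le_of_lt hab hsmall
  have hB0 : 0 ≤ 2 * |lam| * p t₀ := mul_nonneg hlam0 (hPnn t₀ ht₀)
  have hta : (0:ℝ) < t ^ a := Real.rpow_pos_of_pos ht0 a
  -- exponential pointwise bound
  have hexpb : ∀ s, t < s →
      Real.exp (2 * lam * (m₃ s - m₃ t)) ≤ Real.exp a * (s / t) ^ a := by
    intro s hts
    have h1 : 2 * lam * (m₃ s - m₃ t) ≤ a * (1 + Real.log (s / t)) := by
      calc 2 * lam * (m₃ s - m₃ t) ≤ |2 * lam * (m₃ s - m₃ t)| := le_abs_self _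
        _ = 2 * |lam| * |m₃ s - m₃ t| := by
            rw [abs_mul, abs_mul, abs_two]
        _ ≤ 2 * |lam| * (p t * (1 + Real.log (s / t))) :=
            mul_le_mul_of_nonneg_left (hK s hts) hlam0
        _ = a * (1 + Real.log (s / t)) := by rw [hadef]; ring
    calc Real.exp (2 * lam * (m₃ s - m₃ t))
        ≤ Real.exp (a * (1 + Real.log (s / t))) := Real.exp_le_exp.2 h1
      _ = Real.exp a * (s / t) ^ a := by
          rw [Real.rpow_def_of_pos (div_pos (lt_trans ht0 hts) ht0), mul_add, mul_one,
            Real.exp_add, mul_comm a (Real.log (s / t))]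
  -- rpow identity
  have hrint2 : ∀ s, t < s → IntegrableOn (fun u : ℝ => u ^ (a - 1)) (Ioo t s) := by
    intro s hts
    refine kac_bdd_int _ (by fun_prop) _ measure_Ioo_lt_top (s ^ a / t) ?_
    refine (ae_restrict_iff' measurableSet_Ioo).2 (ae_of_all _ fun u hu => ?_)
    have hu0 : 0 < u := lt_trans ht0 hu.1
    rw [abs_of_nonneg (le_of_lt (Real.rpow_pos_of_pos hu0 _)),
      Real.rpow_sub_one (ne_of_gt hu0)]
    exact div_le_div₀ (Real.rpow_nonneg (le_of_lt (lt_trans ht0 hu.1 |>.trans hu.2)) _)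
      (Real.rpow_le_rpow (le_of_lt hu0) (le_of_lt hu.2) ha0) ht0 (le_of_lt hu.1)
  have hrnn : ∀ s, t < s →
      0 ≤ᵐ[volume.restrict (Ioo t s)] fun u : ℝ => u ^ (a - 1) := by
    intro s hts
    refine (ae_restrict_iff' measurableSet_Ioo).2 (ae_of_all _ fun u hu => ?_)
    exact le_of_lt (Real.rpow_pos_of_pos (lt_trans ht0 hu.1) _)
  have hident : ∀ s, t < s →
      (s / t) ^ a = 1 + a / t ^ a * ∫ u in Ioo t s, u ^ (a - 1) := by
    intro s hts
    rcases eq_or_lt_of_le ha0 with h0 | hapos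
    · rw [← h0]
      simp
    · have hs0 : 0 < s := lt_trans ht0 hts
      have hrv : (∫ u in Ioo t s, u ^ (a - 1)) = (s ^ a - t ^ a) / a := by
        rw [setIntegral_congr_set Ioo_ae_eq_Ioc,
          ← intervalIntegral.integral_of_le (le_of_lt hts),
          integral_rpow (Or.inl (by linarith : (-1:ℝ) < a - 1))]
        rw [show a - 1 + 1 = a by ring]
      rw [hrv, Real.div_rpow (le_of_lt hs0) (le_of_lt ht0)]
      field_simp
      ring
  -- ENNReal machinery
  set F : ℝ → ℝ≥0∞ := fun s => ENNReal.ofReal (h₁ s) with hFdef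
  set w : ℝ → ℝ≥0∞ := fun u => ENNReal.ofReal (u ^ (a - 1)) with hwdef
  have hFm : Measurable F := ENNReal.measurable_ofReal.comp hmeas₁
  have hwm : Measurable w := ENNReal.measurable_ofReal.comp (by fun_prop)
  set k : ℝ≥0∞ := ENNReal.ofReal (a / t ^ a) with hkdef
  set G : ℝ → ℝ≥0∞ := fun s => ∫⁻ u in Ioo t s, w u with hGdef
  have hFIoi : (∫⁻ s in Ioi t, F s) = ENNReal.ofReal (∫ s in Ioi t, h₁ s) :=
    (ofReal_integral_eq_lintegral_ofReal (h1intIoi t ht0) (h1nnIoi t ht0)).symm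
  have step1 : (∫⁻ s in Ioi t, ENNReal.ofReal (h₁ s * Real.exp (2 * lam * (m₃ s - m₃ t))))
      ≤ ∫⁻ s in Ioi t, F s * ENNReal.ofReal (Real.exp a * (s / t) ^ a) := by
    refine lintegral_mono_ae ?_
    filter_upwards [h1nnIoi t ht0,
      (ae_restrict_iff' measurableSet_Ioi).2 (ae_of_all _ fun s (hs : s ∈ Ioi t) => hs)]
      with s hnn hmem
    rw [hFdef, ← ENNReal.ofReal_mul hnn]
    exact ENNReal.ofReal_le_ofReal (mul_le_mul_of_nonneg_left (hexpb s hmem) hnn)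
  have step2 : (∫⁻ s in Ioi t, F s * ENNReal.ofReal (Real.exp a * (s / t) ^ a))
      = ∫⁻ s in Ioi t, ENNReal.ofReal (Real.exp a) * (F s + k * (F s * G s)) := by
    refine setLIntegral_congr_fun measurableSet_Ioi (fun s hs => ?_)
    have hts : t < s := hs
    have hRnn : 0 ≤ ∫ u in Ioo t s, u ^ (a - 1) :=
      setIntegral_nonneg_of_ae_restrict (hrnn s hts)
    have hknn : 0 ≤ a / t ^ a := div_nonneg ha0 (le_of_lt hta)
    rw [ENNReal.ofReal_mul (le_of_lt (Real.exp_pos a)), hident s hts,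
      ENNReal.ofReal_add zero_le_one (mul_nonneg hknn hRnn), ENNReal.ofReal_one,
      ENNReal.ofReal_mul hknn,
      ofReal_integral_eq_lintegral_ofReal (hrint2 s hts) (hrnn s hts)]
    rw [hkdef, hGdef, hwdef]
    ring
  have hGm : Measurable G := by
    have : Monotone G := by
      intro s₁ s₂ h
      exact lintegral_mono_set (Ioo_subset_Ioo_right h)
    exact this.measurable
  have step3 : (∫⁻ s in Ioi t, ENNReal.ofReal (Real.exp a) * (F s + k * (F s * G s)))
      = ENNReal.ofReal (Real.exp a)
        * ((∫⁻ s in Ioi t, F s) + k * ∫⁻ s in Ioi t, F s * G s) := by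
    rw [lintegral_const_mul' _ _ ENNReal.ofReal_ne_top]
    congr 1
    rw [lintegral_add_left hFm, lintegral_const_mul' _ _ ENNReal.ofReal_ne_top]
  have step5 : (∫⁻ s in Ioi t, F s * G s)
      = ∫⁻ x in Ioi t, w x * ∫⁻ y in Ioi x, F y := kac_swap t F w hFm hwm
  have step6 : (∫⁻ x in Ioi t, w x * ∫⁻ y in Ioi x, F y)
      ≤ ∫⁻ x in Ioi t, ENNReal.ofReal (p t ^ 2 * x ^ (a - 2)) := by
    refine setLIntegral_mono' measurableSet_Ioi fun x hx => ?_
    have hx0 : 0 < x := lt_trans ht0 hx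
    have hinner : (∫⁻ y in Ioi x, F y) = ENNReal.ofReal (∫ y in Ioi x, h₁ y) :=
      (ofReal_integral_eq_lintegral_ofReal (h1intIoi x hx0) (h1nnIoi x hx0)).symm
    calc w x * ∫⁻ y in Ioi x, F y
        ≤ ENNReal.ofReal (x ^ (a - 1)) * ENNReal.ofReal (p t ^ 2 / x) := by
          rw [hinner]
          exact mul_le_mul_right (ENNReal.ofReal_le_ofReal (hHle x (le_of_lt hx))) _
      _ = ENNReal.ofReal (p t ^ 2 * x ^ (a - 2)) := by
          rw [← ENNReal.ofReal_mul (Real.rpow_nonneg (le_of_lt hx0) _)]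
          congr 1
          have e1 : x ^ (a - 2) = x ^ (a - 1) / x := by
            rw [show a - 2 = a - 1 - 1 by ring]
            exact Real.rpow_sub_one (ne_of_gt hx0) _
          rw [e1, mul_comm (x ^ (a - 1)) (p t ^ 2 / x), div_mul_eq_mul_div, mul_div_assoc]
  have hint_rpow : IntegrableOn (fun x : ℝ => p t ^ 2 * x ^ (a - 2)) (Ioi t) :=
    (integrableOn_Ioi_rpow_of_lt (by linarith : a - 2 < -1) ht0).const_mul _
  have step7 : (∫⁻ x in Ioi t, ENNReal.ofReal (p t ^ 2 * x ^ (a - 2)))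
      = ENNReal.ofReal (p t ^ 2 * (t ^ (a - 1) / (1 - a))) := by
    rw [← ofReal_integral_eq_lintegral_ofReal hint_rpow ?_]
    · congr 1
      rw [integral_const_mul, integral_Ioi_rpow_of_lt (by linarith : a - 2 < -1) ht0]
      congr 1
      rw [show a - 2 + 1 = a - 1 by ring]
      rw [div_eq_div_iff (ne_of_lt (by linarith : a - 1 < 0))
        (ne_of_gt (by linarith : (0:ℝ) < 1 - a))]
      ring
    · refine (ae_restrict_iff' measurableSet_Ioi).2 (ae_of_all _ fun x hx => ?_)
      have hx0 : 0 < x := lt_trans ht0 hx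
      exact mul_nonneg (sq_nonneg _) (le_of_lt (Real.rpow_pos_of_pos hx0 _))
  -- final real inequality
  have hreal : Real.exp a * ((∫ s in Ioi t, h₁ s)
      + a / t ^ a * (p t ^ 2 * (t ^ (a - 1) / (1 - a))))
      ≤ p t ^ 2 / t * (Real.exp 1 / (1 - 2 * |lam| * p t₀)) := by
    have hH : (∫ s in Ioi t, h₁ s) ≤ p t ^ 2 / t := hHle t le_rfl
    have h1 : a / t ^ a * (p t ^ 2 * (t ^ (a - 1) / (1 - a)))
        = p t ^ 2 / t * (a / (1 - a)) := by
      rw [Real.rpow_sub_one (ne_of_gt ht0)]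
      exact kac_alg a (t ^ a) (p t ^ 2) t (ne_of_gt (by linarith)) (ne_of_gt hta)
        (ne_of_gt ht0)
    have hsum : (∫ s in Ioi t, h₁ s) + a / t ^ a * (p t ^ 2 * (t ^ (a - 1) / (1 - a)))
        ≤ p t ^ 2 / t * (1 / (1 - a)) := by
      rw [h1]
      have : p t ^ 2 / t * (1 / (1 - a)) = p t ^ 2 / t + p t ^ 2 / t * (a / (1 - a)) :=
        kac_alg2 a _ (ne_of_gt (by linarith))
      rw [this]
      exact add_le_add hH le_rfl
    have hfrac : 1 / (1 - a) ≤ 1 / (1 - 2 * |lam| * p t₀) :=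
      one_div_le_one_div_of_le (by linarith) (by linarith)
    have hptt : 0 ≤ p t ^ 2 / t := div_nonneg (sq_nonneg _) (le_of_lt ht0)
    calc Real.exp a * ((∫ s in Ioi t, h₁ s)
          + a / t ^ a * (p t ^ 2 * (t ^ (a - 1) / (1 - a))))
        ≤ Real.exp a * (p t ^ 2 / t * (1 / (1 - a))) := by
          refine mul_le_mul_of_nonneg_left hsum (le_of_lt (Real.exp_pos a))
      _ ≤ Real.exp 1 * (p t ^ 2 / t * (1 / (1 - 2 * |lam| * p t₀))) := by
          refine mul_le_mul (Real.exp_le_exp.2 (by linarith)) ?_ ?_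
            (le_of_lt (Real.exp_pos 1))
          · exact mul_le_mul_of_nonneg_left hfrac hptt
          · have h1a : (0:ℝ) < 1 - a := by linarith
            positivity
      _ = p t ^ 2 / t * (Real.exp 1 / (1 - 2 * |lam| * p t₀)) := by ring
  -- assemble
  calc (∫⁻ s in Ioi t, ENNReal.ofReal (h₁ s * Real.exp (2 * lam * (m₃ s - m₃ t))))
      ≤ ∫⁻ s in Ioi t, F s * ENNReal.ofReal (Real.exp a * (s / t) ^ a) := step1
    _ = ENNReal.ofReal (Real.exp a)
        * ((∫⁻ s in Ioi t, F s) + k * ∫⁻ s in Ioi t, F s * G s) := by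
        rw [step2, step3]
    _ ≤ ENNReal.ofReal (Real.exp a)
        * (ENNReal.ofReal (∫ s in Ioi t, h₁ s)
          + k * ENNReal.ofReal (p t ^ 2 * (t ^ (a - 1) / (1 - a)))) := by
        refine mul_le_mul_right (add_le_add (le_of_eq hFIoi) (mul_le_mul_right ?_ _)) _
        rw [step5]
        exact le_trans step6 (le_of_eq step7)
    _ = ENNReal.ofReal (Real.exp a * ((∫ s in Ioi t, h₁ s)
          + a / t ^ a * (p t ^ 2 * (t ^ (a - 1) / (1 - a))))) := by
        rw [hkdef, ← ENNReal.ofReal_mul (div_nonneg ha0 (le_of_lt hta)),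
          ← ENNReal.ofReal_add (hHnn t ht0) ?_,
          ← ENNReal.ofReal_mul (le_of_lt (Real.exp_pos a))]
        exact mul_nonneg (div_nonneg ha0 (le_of_lt hta))
          (mul_nonneg (sq_nonneg _) (div_nonneg
            (Real.rpow_nonneg (le_of_lt ht0) _) (by linarith)))
    _ ≤ ENNReal.ofReal (p t ^ 2 / t * (Real.exp 1 / (1 - 2 * |lam| * p t₀))) :=
        ENNReal.ofReal_le_ofReal hreal
end

section
/- Let h₂ : (0,∞) → [0,1] be measurable, p nonincreasing with p(t₀) satisfying 2|λ| p(t₀) < 1, and suppose |m₃(s) − m₃(t)| ≤ p(t)(1 + log(t/s)) for 0 < s < t. Then for t ≥ t₀: ∫_0^t h₂(s) e^{−2λ(m₃(s)−m₃(t))} ds ≤ t · e/(1 − 2|λ|p(t₀)). -/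
open MeasureTheory Set Real

theorem second_integral_bound_kac
    (h₂ : ℝ → ℝ) (hmeas₂ : Measurable h₂)
    (hbd : ∀ᵐ s ∂(volume.restrict (Ioi (0:ℝ))), 0 ≤ h₂ s ∧ h₂ s ≤ 1)
    (m₃ : ℝ → ℝ) (p : ℝ → ℝ) (hpnn : ∀ t, 0 ≤ p t)
    (hpanti : ∀ s t : ℝ, 0 < s → s ≤ t → p t ≤ p s)
    (hm : ∀ s t : ℝ, 0 < s → s < t → |m₃ s - m₃ t| ≤ p t * (1 + Real.log (t / s)))
    (lam t₀ : ℝ) (ht₀ : 0 < t₀) (hsmall : 2 * |lam| * p t₀ < 1) :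
    ∀ t : ℝ, t₀ ≤ t →
      ∫⁻ s in Ioo 0 t, ENNReal.ofReal (h₂ s * Real.exp (-(2 * lam * (m₃ s - m₃ t)))) ≤
        ENNReal.ofReal (t * (Real.exp 1 / (1 - 2 * |lam| * p t₀))) := by
  intro t ht
  have ht0 : 0 < t := lt_of_lt_of_le ht₀ ht
  set a : ℝ := 2 * |lam| * p t with ha_def
  have hanonneg : 0 ≤ a := by
    have := hpnn t; positivity
  have ha_le : a ≤ 2 * |lam| * p t₀ := by
    have := hpanti t₀ t ht₀ ht
    nlinarith [abs_nonneg lam]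
  have ha1 : a < 1 := lt_of_le_of_lt ha_le hsmall
  set g : ℝ → ℝ := fun s => Real.exp 1 * (t ^ a * s ^ (-a)) with hg
  have hpt : ∀ᵐ s ∂(volume.restrict (Ioo (0:ℝ) t)),
      ENNReal.ofReal (h₂ s * Real.exp (-(2 * lam * (m₃ s - m₃ t)))) ≤
        ENNReal.ofReal (g s) := by
    have hbd' : ∀ᵐ s ∂(volume.restrict (Ioo (0:ℝ) t)), 0 ≤ h₂ s ∧ h₂ s ≤ 1 :=
      ae_restrict_of_ae_restrict_of_subset Ioo_subset_Ioi_self hbd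
    filter_upwards [hbd', ae_restrict_mem measurableSet_Ioo] with s hs hmem
    apply ENNReal.ofReal_le_ofReal
    obtain ⟨hs0, hst⟩ := hmem
    have hexp : Real.exp (-(2 * lam * (m₃ s - m₃ t))) ≤ g s := by
      have hd : |m₃ s - m₃ t| ≤ p t * (1 + Real.log (t / s)) := hm s t hs0 hst
      have h1 : -(2 * lam * (m₃ s - m₃ t)) ≤ 2 * |lam| * |m₃ s - m₃ t| := by
        calc -(2 * lam * (m₃ s - m₃ t)) ≤ |2 * lam * (m₃ s - m₃ t)| := neg_le_abs _
          _ = 2 * |lam| * |m₃ s - m₃ t| := by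
            rw [abs_mul, abs_mul]; simp [abs_of_nonneg (by norm_num : (0:ℝ) ≤ 2)]
      have h2 : -(2 * lam * (m₃ s - m₃ t)) ≤ a * (1 + Real.log (t / s)) := by
        refine h1.trans ?_
        have : 2 * |lam| * |m₃ s - m₃ t| ≤ 2 * |lam| * (p t * (1 + Real.log (t / s))) := by
          apply mul_le_mul_of_nonneg_left hd (by positivity)
        linarith [this, (by ring : 2 * |lam| * (p t * (1 + Real.log (t / s)))
          = a * (1 + Real.log (t / s)))]
      have hts : 1 < t / s := (one_lt_div hs0).mpr hst
      have hlog : 0 ≤ Real.log (t / s) := Real.log_nonneg hts.le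
      calc Real.exp (-(2 * lam * (m₃ s - m₃ t)))
          ≤ Real.exp (a * (1 + Real.log (t / s))) := Real.exp_le_exp.mpr h2
        _ = Real.exp a * Real.exp (a * Real.log (t / s)) := by
            rw [← Real.exp_add]; ring_nf
        _ ≤ Real.exp 1 * Real.exp (a * Real.log (t / s)) :=
            mul_le_mul_of_nonneg_right (Real.exp_le_exp.mpr ha1.le) (Real.exp_nonneg _)
        _ = Real.exp 1 * (t / s) ^ a := by
            rw [Real.rpow_def_of_pos (by positivity), mul_comm (Real.log _)]
        _ = g s := by
            rw [hg]
            simp only []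
            rw [Real.div_rpow ht0.le hs0.le, Real.rpow_neg hs0.le, div_eq_mul_inv]
    calc h₂ s * Real.exp (-(2 * lam * (m₃ s - m₃ t)))
        ≤ 1 * Real.exp (-(2 * lam * (m₃ s - m₃ t))) := by
          apply mul_le_mul_of_nonneg_right hs.2 (Real.exp_nonneg _)
      _ = Real.exp (-(2 * lam * (m₃ s - m₃ t))) := one_mul _
      _ ≤ g s := hexp
  have hint_rpow : IntervalIntegrable (fun s : ℝ => s ^ (-a)) volume 0 t :=
    intervalIntegral.intervalIntegrable_rpow' (by linarith)
  have hintOn : IntegrableOn (fun s : ℝ => s ^ (-a)) (Ioo 0 t) volume := by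
    have := (intervalIntegrable_iff_integrableOn_Ioo_of_le ht0.le).mp hint_rpow
    exact this
  have hint : IntegrableOn g (Ioo 0 t) volume := by
    have := (hintOn.const_mul (t ^ a)).const_mul (Real.exp 1)
    simpa [hg, mul_assoc, IntegrableOn] using this
  have hnn : 0 ≤ᵐ[volume.restrict (Ioo (0:ℝ) t)] g := by
    filter_upwards [ae_restrict_mem measurableSet_Ioo] with s hs
    have : (0:ℝ) < s := hs.1
    positivity
  have hval : ∫ s in Ioo 0 t, g s = Real.exp 1 * t / (1 - a) := by
    have hIoo : ∫ s in Ioo (0:ℝ) t, (fun s : ℝ => s ^ (-a)) s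
        = ∫ s in (0:ℝ)..t, s ^ (-a) := by
      rw [intervalIntegral.integral_of_le ht0.le, integral_Ioc_eq_integral_Ioo]
    have hcomp : ∫ s in (0:ℝ)..t, s ^ (-a) = t ^ (1 - a) / (1 - a) := by
      rw [integral_rpow (Or.inl (by linarith))]
      rw [Real.zero_rpow (by linarith)]
      norm_num
      ring_nf
    rw [hg]
    rw [MeasureTheory.integral_const_mul, MeasureTheory.integral_const_mul, hIoo, hcomp]
    have : t ^ a * (t ^ (1 - a) / (1 - a)) = t / (1 - a) := by
      rw [mul_div_assoc', ← Real.rpow_add ht0]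
      norm_num
    rw [this, mul_div_assoc']
  calc ∫⁻ s in Ioo 0 t, ENNReal.ofReal (h₂ s * Real.exp (-(2 * lam * (m₃ s - m₃ t))))
      ≤ ∫⁻ s in Ioo 0 t, ENNReal.ofReal (g s) := lintegral_mono_ae hpt
    _ = ENNReal.ofReal (∫ s in Ioo 0 t, g s) :=
        (ofReal_integral_eq_lintegral_ofReal hint hnn).symm
    _ ≤ ENNReal.ofReal (t * (Real.exp 1 / (1 - 2 * |lam| * p t₀))) := by
        apply ENNReal.ofReal_le_ofReal
        rw [hval]
        rw [mul_comm t, div_mul_eq_mul_div]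
        gcongr <;> linarith
end
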